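/- arXiv:1410.8567 — 5 statements merged into one kernel-verified Lean document; each statement's English description precedes it below -/
import Mathlib

section
/- Let A ∈ M_n(ℂ) be a single-eigenvalue Jordan matrix with eigenvalue 0 (so A is nilpotent, and A ∈ Ω_n). Let Φ : D → Ω_n be holomorphic with Φ(0) = A, and write φ = (φ_1,…,φ_n) := π∘Φ. Then for every 1 ≤ i ≤ n the coordinate function φ_i satisfies φ_i(ζ) = O(ζ^{d_i(A)}) at 0. -/
open Polynomial

noncomputable section

/-- The open unit disc in `ℂ`. -/
def unitDisc : Set ℂ := Metric.ball 0 1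

/-- `g(ζ) = O((ζ-α)^d)` at `α`: for a function holomorphic near `α`, vanishing
to order at least `d`, i.e. all derivatives of order `< d` vanish at `α`. -/
def VanishesToOrder (g : ℂ → ℂ) (α : ℂ) (d : ℕ) : Prop :=
  ∀ i < d, iteratedDeriv i g α = 0

/-- The map `π : M_n(ℂ) → ℂ^n`, `π(A) = (σ_1(A), …, σ_n(A))`, where
`det(tI - A) = ∑_{j=0}^n (-1)^j σ_j(A) t^{n-j}`.  Index `i : Fin n` stands for `j = i+1`. -/
def piCoef (n : ℕ) (A : Matrix (Fin n) (Fin n) ℂ) : Fin n → ℂ :=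
  fun i => (-1 : ℂ) ^ ((i : ℕ) + 1) * (Matrix.charpoly A).coeff (n - ((i : ℕ) + 1))

/-- The spectral ball `Ω_n`: matrices whose eigenvalues (roots of the characteristic
polynomial) all have modulus `< 1`. -/
def SpectralBall (n : ℕ) : Set (Matrix (Fin n) (Fin n) ℂ) :=
  { A | ∀ z ∈ (Matrix.charpoly A).roots, ‖z‖ < 1 }

/-- The symmetrized polydisc `G_n = π(Ω_n)`. -/
def SymPolydisc (n : ℕ) : Set (Fin n → ℂ) := piCoef n '' SpectralBall n

/-- `P_{[v]}(t) = t^n + ∑_{j=1}^n (-1)^j v_j t^{n-j}`. -/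
def Pv (n : ℕ) (v : Fin n → ℂ) : Polynomial ℂ :=
  X ^ n + ∑ i : Fin n, C ((-1 : ℂ) ^ ((i : ℕ) + 1) * v i) * X ^ (n - ((i : ℕ) + 1))

/-- `k`-th derivative of a polynomial with respect to the indeterminate. -/
def polyDeriv (k : ℕ) (P : Polynomial ℂ) : Polynomial ℂ :=
  (fun Q : Polynomial ℂ => Polynomial.derivative Q)^[k] P

/-- A matrix is cyclic (non-derogatory) if some vector has iterates spanning `ℂ^n`. -/
def IsCyclicMatrix {n : ℕ} (M : Matrix (Fin n) (Fin n) ℂ) : Prop :=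
  ∃ v : Fin n → ℂ, Submodule.span ℂ { w : Fin n → ℂ | ∃ k : ℕ, w = (M ^ k).mulVec v } = ⊤

open scoped Classical in
/-- `d_i(B) = 1 + #{ j : m-i+2 ≤ j ≤ m, B_{j-1,j} = 0 }` (1-indexed entries). -/
def dIdx {m : ℕ} (B : Matrix (Fin m) (Fin m) ℂ) (i : ℕ) : ℕ :=
  1 + ((Finset.Icc (m - i + 2) m).filter
      (fun j => ∀ (h1 : j - 2 < m) (h2 : j - 1 < m), B ⟨j - 2, h1⟩ ⟨j - 1, h2⟩ = 0)).card

open scoped Classical in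
/-- A single-eigenvalue Jordan matrix with eigenvalue `lam`: diagonal entries `lam`,
superdiagonal entries `0` or `1`, all other entries `0`, and the sizes of the consecutive
Jordan blocks (delimited by the vanishing superdiagonal entries) nondecreasing.
The list `L` records the consecutive Jordan block sizes; the superdiagonal entry in
(0-indexed) column `j` vanishes exactly when `j` is a proper partial sum of `L`. -/
def IsSingleJordan {m : ℕ} (B : Matrix (Fin m) (Fin m) ℂ) (lam : ℂ) : Prop :=
  (∀ i, B i i = lam) ∧
  (∀ i j : Fin m, (j : ℕ) ≠ (i : ℕ) → (j : ℕ) ≠ (i : ℕ) + 1 → B i j = 0) ∧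
  ∃ L : List ℕ, (∀ x ∈ L, 0 < x) ∧ L.sum = m ∧ L.Pairwise (· ≤ ·) ∧
    ∀ i j : Fin m, (j : ℕ) = (i : ℕ) + 1 →
      B i j = if (∃ t, 0 < t ∧ t < L.length ∧ (L.take t).sum = (j : ℕ)) then 0 else 1

/-- Partial sums `n_t = m_1 + ⋯ + m_t` of block sizes. -/
def nsum {s : ℕ} (m : Fin s → ℕ) (t : ℕ) : ℕ :=
  ∑ j ∈ Finset.univ.filter (fun j : Fin s => (j : ℕ) < t), m j

/-- `A = diag(B_1, …, B_s)` is a block Jordan matrix with single-eigenvalue Jordan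
blocks `B j` of size `m j` and pairwise distinct eigenvalues `lam j`. -/
def IsBlockJordan {n s : ℕ} (m : Fin s → ℕ) (lam : Fin s → ℂ)
    (B : ∀ j : Fin s, Matrix (Fin (m j)) (Fin (m j)) ℂ)
    (A : Matrix (Fin n) (Fin n) ℂ) : Prop :=
  (∑ j, m j) = n ∧ Function.Injective lam ∧ (∀ j, 0 < m j) ∧
  (∀ j, IsSingleJordan (B j) (lam j)) ∧
  (∀ (j : Fin s) (a b : Fin (m j)) (h1 : nsum m (j : ℕ) + (a : ℕ) < n)
      (h2 : nsum m (j : ℕ) + (b : ℕ) < n),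
      A ⟨nsum m (j : ℕ) + (a : ℕ), h1⟩ ⟨nsum m (j : ℕ) + (b : ℕ), h2⟩ = B j a b) ∧
  (∀ (i k : Fin n) (j j' : Fin s), j ≠ j' →
      nsum m (j : ℕ) ≤ (i : ℕ) → (i : ℕ) < nsum m ((j : ℕ) + 1) →
      nsum m (j' : ℕ) ≤ (k : ℕ) → (k : ℕ) < nsum m ((j' : ℕ) + 1) →
      A i k = 0)

/-- The conditions (★) at `α` relative to a block Jordan matrix with data `m, lam, B`:
`(d^k P_{[φ(ζ)]}/dt^k)(λ_j) = O((ζ-α)^{d_{m_j-k}(B_j)})` for `1 ≤ j ≤ s`, `0 ≤ k ≤ m_j - 1`. -/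
def StarConditions {n s : ℕ} (m : Fin s → ℕ) (lam : Fin s → ℂ)
    (B : ∀ j : Fin s, Matrix (Fin (m j)) (Fin (m j)) ℂ)
    (φ : ℂ → Fin n → ℂ) (α : ℂ) : Prop :=
  ∀ (j : Fin s), ∀ k < m j,
    VanishesToOrder (fun ζ => (polyDeriv k (Pv n (φ ζ))).eval (lam j)) α
      (dIdx (B j) (m j - k))

/-- Sum of all monomials of degree `d` in `k` variables (complete homogeneous symmetric sum). -/
def homogSum (k d : ℕ) (x : Fin k → ℂ) : ℂ :=
  ∑ c ∈ Finset.Nat.antidiagonalTuple k d, ∏ i, x i ^ c i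

/-- Divided difference `Δ^k P (x_1, …, x_{k+1}) = ∑_{j≥k} a_j ∑_{i_1+⋯+i_{k+1}=j-k} x^i`. -/
def divDiff (P : Polynomial ℂ) (k : ℕ) (x : Fin (k + 1) → ℂ) : ℂ :=
  ∑ j ∈ Finset.Icc k P.natDegree, P.coeff j * homogSum (k + 1) (j - k) x

/-- The Lempert function of the spectral ball. -/
def lempertOmega (n : ℕ) (A B : Matrix (Fin n) (Fin n) ℂ) : ℝ :=
  sInf { r : ℝ | ∃ α ∈ unitDisc, r = ‖α‖ ∧
    ∃ Φ : ℂ → Matrix (Fin n) (Fin n) ℂ,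
      (∀ i j, DifferentiableOn ℂ (fun ζ => Φ ζ i j) unitDisc) ∧
      Set.MapsTo Φ unitDisc (SpectralBall n) ∧ Φ α = A ∧ Φ 0 = B }

/-- The matrix `B_k^λ(ζ)`. -/
def Bmat (k : ℕ) (lam ζ : ℂ) : Matrix (Fin k) (Fin k) ℂ :=
  Matrix.of fun i j =>
    if (j : ℕ) = (i : ℕ) then lam
    else if (j : ℕ) = (i : ℕ) + 1 then (if (i : ℕ) = k - 2 then 1 else ζ)
    else if (i : ℕ) = k - 1 ∧ (j : ℕ) = 0 then ζ
    else 0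

/-- The block diagonal matrix `diag(B_k^{λ_1}(ζ), B_l^{λ_2}(ζ))` as an `(k+l)×(k+l)` matrix. -/
def BmatPair (k l : ℕ) (lam1 lam2 ζ : ℂ) : Matrix (Fin (k + l)) (Fin (k + l)) ℂ :=
  Matrix.reindex finSumFinEquiv finSumFinEquiv
    (Matrix.fromBlocks (Bmat k lam1 ζ) 0 0 (Bmat l lam2 ζ))

end


section Statement3Aux

open Polynomial


/-- A down-closed filter of an `Ico` is an initial segment. -/
lemma filter_Ico_down (a c : ℕ) (Q : ℕ → Prop) [DecidablePred Q]
    (h : ∀ x y, a ≤ x → x ≤ y → y < c → Q y → Q x) :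
    (Finset.Ico a c).filter Q = Finset.Ico a (a + ((Finset.Ico a c).filter Q).card) := by
  set D := (Finset.Ico a c).filter Q with hD
  have hsub : Finset.Ico a (a + D.card) ⊆ D := by
    intro x hx
    simp only [Finset.mem_Ico] at hx
    by_contra hxD
    have hDsub : D ⊆ Finset.Ico a x := by
      intro y hy
      have hy' := Finset.mem_filter.1 hy
      have hyc := Finset.mem_Ico.1 hy'.1
      refine Finset.mem_Ico.2 ⟨hyc.1, ?_⟩
      by_contra hxy
      push_neg at hxy
      exact hxD (Finset.mem_filter.2 ⟨Finset.mem_Ico.2 ⟨hx.1, lt_of_le_of_lt hxy hyc.2⟩,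
        h x y hx.1 hxy hyc.2 hy'.2⟩)
    have hcard : D.card ≤ x - a := by simpa using Finset.card_le_card hDsub
    omega
  exact (Finset.eq_of_subset_of_card_le hsub (by simp)).symm

/-- Rearrangement: a sum of a monotone function over a subset of `range N` is at most
the sum over the top `|V|` indices. -/
lemma sum_subset_le_suffix (f : ℕ → ℕ) :
    ∀ (N : ℕ) (V : Finset ℕ), (∀ a b, a ≤ b → b < N → f a ≤ f b) → V ⊆ Finset.range N →
      ∑ v ∈ V, f v ≤ ∑ k ∈ Finset.Ico (N - V.card) N, f k := by
  intro N
  induction N with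
  | zero =>
    intro V _ hV
    have : V = ∅ := Finset.subset_empty.mp (by simpa using hV)
    simp [this]
  | succ N ih =>
    intro V hmono hV
    by_cases hN : N ∈ V
    · have hV' : V.erase N ⊆ Finset.range N := by
        intro x hx
        have h1 := hV (Finset.mem_of_mem_erase hx)
        have h2 := Finset.ne_of_mem_erase hx
        simp only [Finset.mem_range] at h1 ⊢
        omega
      have h1 := ih (V.erase N) (fun a b hab hb => hmono a b hab (by omega)) hV'
      have hcard : (V.erase N).card = V.card - 1 := Finset.card_erase_of_mem hN
      have hc1 : 1 ≤ V.card := Finset.card_pos.2 ⟨N, hN⟩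
      have hsum : ∑ v ∈ V, f v = ∑ v ∈ V.erase N, f v + f N :=
        (Finset.sum_erase_add V f hN).symm
      have hIco : ∑ k ∈ Finset.Ico (N + 1 - V.card) (N + 1), f k
          = ∑ k ∈ Finset.Ico (N + 1 - V.card) N, f k + f N :=
        Finset.sum_Ico_succ_top (by omega) f
      have hbd : N + 1 - V.card = N - (V.card - 1) := by omega
      rw [hsum, hIco, hbd]
      rw [hcard] at h1
      omega
    · have hV' : V ⊆ Finset.range N := by
        intro x hx
        have h1 := hV hx
        simp only [Finset.mem_range] at h1 ⊢
        rcases Nat.lt_succ_iff_lt_or_eq.mp h1 with h | h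
        · exact h
        · exact absurd (h ▸ hx) hN
      have hVN : V.card ≤ N := by
        have := Finset.card_le_card hV'
        simpa using this
      have h1 := ih V (fun a b hab hb => hmono a b hab (by omega)) hV'
      refine h1.trans ?_
      have hshift : ∑ k ∈ Finset.Ico (N - V.card) N, f k
          ≤ ∑ k ∈ Finset.Ico (N - V.card) N, f (k + 1) := by
        refine Finset.sum_le_sum fun k hk => ?_
        have hk' := Finset.mem_Ico.1 hk
        exact hmono k (k + 1) (by omega) (by omega)
      refine hshift.trans (le_of_eq ?_)
      rw [Finset.sum_Ico_eq_sum_range, Finset.sum_Ico_eq_sum_range]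
      have e1 : N - (N - V.card) = V.card := by omega
      have e2 : N + 1 - (N + 1 - V.card) = V.card := by omega
      rw [e1, e2]
      refine Finset.sum_congr rfl fun j hj => ?_
      congr 1
      omega
/-- Core combinatorial estimate. -/
lemma comb_core (n len : ℕ) (ℓ : ℕ → ℕ) (hlpos : ∀ k < len, 0 < ℓ k)
    (hlmono : ∀ a b, a ≤ b → b < len → ℓ a ≤ ℓ b)
    (hsum : ∑ k ∈ Finset.range len, ℓ k = n)
    (i1 : ℕ) (hi11 : 0 < i1) (hi1n : i1 ≤ n)
    (S T : Finset ℕ) (hS : ∀ p ∈ S, p < n) (hScard : S.card = i1) (hTS : T ⊆ S)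
    (hgood : ∀ p ∈ T, p + 1 ∈ S ∧
      ¬ ∃ u, 0 < u ∧ u < len ∧ (∑ k ∈ Finset.range u, ℓ k) = p + 1) :
    T.card + 1
      + ((Finset.Ico 1 len).filter
          (fun u => n - i1 + 1 ≤ ∑ k ∈ Finset.range u, ℓ k)).card ≤ i1 := by
  set P : ℕ → ℕ := fun u => ∑ k ∈ Finset.range u, ℓ k with hP
  have Pmono : ∀ a b, a ≤ b → P a ≤ P b := by
    intro a b hab
    exact Finset.sum_le_sum_of_subset (Finset.range_subset_range.2 hab)
  have Psucc : ∀ a, P (a + 1) = P a + ℓ a := fun a => Finset.sum_range_succ ℓ a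
  have Pstrict : ∀ a b, a < b → a < len → P a < P b := by
    intro a b hab halen
    have h1 : P a + ℓ a ≤ P b := by
      rw [← Psucc a]; exact Pmono _ _ hab
    have := hlpos a halen
    omega
  have Plen : P len = n := hsum
  have hlen : 0 < len := by
    by_contra h
    push_neg at h
    interval_cases len
    simp [hP] at Plen
    omega
  -- the "block index" function
  set b : ℕ → ℕ := fun p => ((Finset.Ico 1 len).filter (fun u => P u ≤ p)).card with hb
  have hbdef : ∀ p, b p = ((Finset.Ico 1 len).filter (fun u => P u ≤ p)).card := fun _ => rfl
  have b_lt_len : ∀ p, b p < len := by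
    intro p
    have h1 : ((Finset.Ico 1 len).filter (fun u => P u ≤ p)).card ≤ (Finset.Ico 1 len).card :=
      Finset.card_le_card (Finset.filter_subset _ _)
    simp only [Nat.card_Ico] at h1
    rw [hbdef]
    omega
  have b_interval : ∀ p, p < n → P (b p) ≤ p ∧ p < P (b p + 1) := by
    intro p hpn
    have hdown : (Finset.Ico 1 len).filter (fun u => P u ≤ p)
        = Finset.Ico 1 (1 + b p) := by
      rw [hbdef]
      exact filter_Ico_down 1 len (fun u => P u ≤ p)
        (fun x y hx hxy hy hQ => le_trans (Pmono x y hxy) hQ)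
    constructor
    · rcases Nat.eq_zero_or_pos (b p) with h0 | h0
      · rw [h0]; simp [hP]
      · have hmem : b p ∈ (Finset.Ico 1 len).filter (fun u => P u ≤ p) := by
          rw [hdown]
          exact Finset.mem_Ico.2 ⟨h0, by omega⟩
        exact (Finset.mem_filter.1 hmem).2
    · by_cases hbl : b p + 1 < len
      · have hnmem : b p + 1 ∉ (Finset.Ico 1 len).filter (fun u => P u ≤ p) := by
          rw [hdown]
          simp
          omega
        have h2 : ¬ (P (b p + 1) ≤ p) :=
          fun hle => hnmem (Finset.mem_filter.2 ⟨Finset.mem_Ico.2 ⟨by omega, hbl⟩, hle⟩)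
        omega
      · have : P len ≤ P (b p + 1) := Pmono _ _ (by omega)
        omega
  have b_eq : ∀ p, (¬ ∃ u, 0 < u ∧ u < len ∧ P u = p + 1) → b (p + 1) = b p := by
    intro p hnb
    have : ((Finset.Ico 1 len).filter (fun u => P u ≤ p + 1))
        = ((Finset.Ico 1 len).filter (fun u => P u ≤ p)) := by
      refine Finset.filter_congr fun u hu => ?_
      have hu' := Finset.mem_Ico.1 hu
      have hne : P u ≠ p + 1 := fun he => hnb ⟨u, hu'.1, hu'.2, he⟩
      constructor <;> intro h <;> omega
    rw [hbdef, hbdef, this]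
  set V : Finset ℕ := S.image b with hV
  have hVlen : V ⊆ Finset.range len := by
    intro v hv
    rcases Finset.mem_image.1 hv with ⟨p, _, rfl⟩
    exact Finset.mem_range.2 (b_lt_len p)
  -- |S| ≤ ∑_{v ∈ V} ℓ v
  have hScount : S.card ≤ ∑ v ∈ V, ℓ v := by
    have hsub : S ⊆ V.biUnion (fun v => Finset.Ico (P v) (P (v + 1))) := by
      intro p hp
      have hi := b_interval p (hS p hp)
      exact Finset.mem_biUnion.2 ⟨b p, Finset.mem_image_of_mem b hp,
        Finset.mem_Ico.2 ⟨hi.1, hi.2⟩⟩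
    calc S.card ≤ (V.biUnion (fun v => Finset.Ico (P v) (P (v + 1)))).card :=
          Finset.card_le_card hsub
      _ ≤ ∑ v ∈ V, (Finset.Ico (P v) (P (v + 1))).card := Finset.card_biUnion_le
      _ = ∑ v ∈ V, ℓ v := by
          refine Finset.sum_congr rfl fun v hv => ?_
          have := Psucc v
          simp only [Nat.card_Ico]
          omega
  -- the set of fiber-minima
  set Min : Finset ℕ := S.filter (fun p => ∀ q ∈ S, b q = b p → p ≤ q) with hMin
  have hMincard : Min.card = V.card := by
    refine Finset.card_bij (fun p _ => b p) ?_ ?_ ?_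
    · intro p hp
      exact Finset.mem_image_of_mem b (Finset.mem_filter.1 hp).1
    · intro p₁ hp₁ p₂ hp₂ hbe
      have h1 := (Finset.mem_filter.1 hp₁).2 p₂ (Finset.mem_filter.1 hp₂).1 hbe.symm
      have h2 := (Finset.mem_filter.1 hp₂).2 p₁ (Finset.mem_filter.1 hp₁).1 hbe
      omega
    · intro v hv
      rcases Finset.mem_image.1 hv with ⟨p, hp, rfl⟩
      have hne : (S.filter (fun q => b q = b p)).Nonempty :=
        ⟨p, Finset.mem_filter.2 ⟨hp, rfl⟩⟩
      set p' := (S.filter (fun q => b q = b p)).min' hne with hp'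
      have hp'mem := (S.filter (fun q => b q = b p)).min'_mem hne
      have hp'S := (Finset.mem_filter.1 hp'mem).1
      have hp'b : b p' = b p := (Finset.mem_filter.1 hp'mem).2
      refine ⟨p', Finset.mem_filter.2 ⟨hp'S, ?_⟩, hp'b⟩
      intro q hq hbq
      exact Finset.min'_le _ q (Finset.mem_filter.2 ⟨hq, by omega⟩)
  have hMinS : Min ⊆ S := Finset.filter_subset _ _
  -- injection T → S \ Min
  have hTcard : T.card ≤ S.card - Min.card := by
    have h1 : T.card ≤ (S \ Min).card := by
      refine Finset.card_le_card_of_injOn (fun p => p + 1) ?_ ?_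
      · intro p hp
        show p + 1 ∈ S \ Min
        obtain ⟨hpS, hnb⟩ := hgood p hp
        have hbeq : b (p + 1) = b p := b_eq p hnb
        refine Finset.mem_sdiff.2 ⟨hpS, ?_⟩
        intro hmem
        have := (Finset.mem_filter.1 hmem).2 p (hTS hp) hbeq.symm
        omega
      · intro a _ c _ h
        have h' : a + 1 = c + 1 := h
        omega
    have := Finset.card_sdiff_of_subset hMinS
    omega
  -- final contradiction
  by_contra hcon
  push_neg at hcon
  set D := (Finset.Ico 1 len).filter (fun u => n - i1 + 1 ≤ P u) with hD
  set E := (Finset.Ico 1 len).filter (fun u => P u ≤ n - i1) with hE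
  have hDE : D.card + E.card = len - 1 := by
    have h1 := Finset.card_filter_add_card_filter_not
      (s := Finset.Ico 1 len) (p := fun u => n - i1 + 1 ≤ P u)
    have h2 : (Finset.Ico 1 len).filter (fun u => ¬ (n - i1 + 1 ≤ P u)) = E := by
      refine Finset.filter_congr fun u hu => ?_
      constructor <;> intro h <;> omega
    rw [h2] at h1
    rw [Nat.card_Ico] at h1
    exact h1
  have hr1 : 1 ≤ V.card := by
    have : S.Nonempty := Finset.card_pos.1 (by omega)
    exact Finset.card_pos.2 (this.image b)
  have hrD : V.card ≤ D.card := by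
    have hVS : V.card ≤ S.card := by
      calc V.card = Min.card := hMincard.symm
        _ ≤ S.card := Finset.card_le_card hMinS
    omega
  -- P (len - V.card) ≥ n - i1 + 1
  have hEdown := filter_Ico_down 1 len (fun u => P u ≤ n - i1)
    (fun x y hx hxy hy hQ => le_trans (Pmono x y hxy) hQ)
  have hkey : n - i1 + 1 ≤ P (len - V.card) := by
    by_contra hk
    push_neg at hk
    have hmem : len - V.card ∈ E := by
      refine Finset.mem_filter.2 ⟨Finset.mem_Ico.2 ⟨by omega, by omega⟩, by omega⟩
    rw [hE, hEdown] at hmem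
    have h3 := Finset.mem_Ico.1 hmem
    have hEcard : E.card = ((Finset.Ico 1 len).filter (fun u => P u ≤ n - i1)).card := rfl
    omega
  have hsuffix : P (len - V.card) + ∑ k ∈ Finset.Ico (len - V.card) len, ℓ k = n := by
    have h5 := Finset.sum_Ico_consecutive ℓ (Nat.zero_le (len - V.card)) (Nat.sub_le len V.card)
    simp only [← Finset.range_eq_Ico] at h5
    have e1 : P (len - V.card) = ∑ x ∈ Finset.range (len - V.card), ℓ x := rfl
    have e2 : P len = ∑ x ∈ Finset.range len, ℓ x := rfl
    omega
  have hrearr := sum_subset_le_suffix ℓ len V hlmono hVlen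
  have hPdef : P (len - V.card) = ∑ x ∈ Finset.range (len - V.card), ℓ x := rfl
  have hSM : Min.card ≤ S.card := Finset.card_le_card hMinS
  have hfin : i1 ≤ ∑ x ∈ Finset.Ico (len - V.card) len, ℓ x := by
    have := hScount
    rw [hScard] at this
    exact le_trans this hrearr
  have hfin2 : ∑ x ∈ Finset.Ico (len - V.card) len, ℓ x + (n - i1 + 1) ≤ n := by omega
  omega

/-- Eventual equality propagates to iterated derivatives. -/
lemma eventuallyEq_iteratedDeriv {x : ℂ} :
    ∀ (n : ℕ) {f g : ℂ → ℂ}, f =ᶠ[nhds x] g →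
      iteratedDeriv n f =ᶠ[nhds x] iteratedDeriv n g := by
  intro n
  induction n with
  | zero => intro f g h; simpa [iteratedDeriv_zero] using h
  | succ n ih =>
    intro f g h
    simp only [iteratedDeriv_succ']
    exact ih h.deriv

lemma analyticAt_deriv {h : ℂ → ℂ} {c : ℂ} (hh : AnalyticAt ℂ h c) :
    AnalyticAt ℂ (deriv h) c := by
  rcases hh.exists_mem_nhds_analyticOnNhd with ⟨s, hs, hos⟩
  exact hos.deriv c (mem_of_mem_nhds hs)

/-- If `h` is analytic at `0`, then `ζ ^ k * h ζ` has vanishing derivatives of order `< k`. -/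
lemma iteratedDeriv_pow_mul_eq_zero :
    ∀ (k : ℕ) (h : ℂ → ℂ), AnalyticAt ℂ h 0 → ∀ j < k,
      iteratedDeriv j (fun ζ : ℂ => ζ ^ k * h ζ) 0 = 0 := by
  intro k
  induction k with
  | zero => intro h _ j hj; omega
  | succ k ih =>
    intro h hh j hj
    match j with
    | 0 => simp [iteratedDeriv_zero]
    | j + 1 =>
      rw [iteratedDeriv_succ']
      set g : ℂ → ℂ := fun ζ => (k + 1 : ℂ) * h ζ + ζ * deriv h ζ with hg
      have hgana : AnalyticAt ℂ g 0 := by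
        exact (analyticAt_const.mul hh).add
          ((analyticAt_id).mul (analyticAt_deriv hh))
      have hev : deriv (fun ζ : ℂ => ζ ^ (k + 1) * h ζ) =ᶠ[nhds 0]
          (fun ζ : ℂ => ζ ^ k * g ζ) := by
        have hdiff : ∀ᶠ ζ in nhds (0 : ℂ), DifferentiableAt ℂ h ζ :=
          hh.eventually_analyticAt.mono fun ζ hζ => hζ.differentiableAt
        filter_upwards [hdiff] with ζ hζ
        rw [deriv_fun_mul (differentiableAt_pow _) hζ]
        simp only [deriv_pow_field, hg, Nat.add_sub_cancel]
        push_cast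
        ring
      have := eventuallyEq_iteratedDeriv j hev
      rw [this.eq_of_nhds]
      exact ih g hgana j (by omega)

lemma vanishesToOrder_of_factor (g : ℂ → ℂ) (d : ℕ) (H : ℂ → ℂ) (hH : AnalyticAt ℂ H 0)
    (hfac : ∀ ζ, g ζ = ζ ^ d * H ζ) : ∀ j < d, iteratedDeriv j g 0 = 0 := by
  intro j hj
  have : g = fun ζ => ζ ^ d * H ζ := funext hfac
  rw [this]
  exact iteratedDeriv_pow_mul_eq_zero d H hH j hj

lemma analyticAt_dslope {f : ℂ → ℂ} (hf : AnalyticAt ℂ f 0) :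
    AnalyticAt ℂ (dslope f 0) 0 := by
  rcases hf with ⟨p, hp⟩
  exact ⟨p.fslope, hp.has_fpower_series_dslope_fslope⟩

lemma analyticAt_det {I : Type*} [Fintype I] [DecidableEq I] (M : ℂ → Matrix I I ℂ)
    (hM : ∀ p q, AnalyticAt ℂ (fun ζ => M ζ p q) 0) :
    AnalyticAt ℂ (fun ζ => (M ζ).det) 0 := by
  have h1 : (fun ζ => (M ζ).det)
      = fun ζ => ∑ σ : Equiv.Perm I, Equiv.Perm.sign σ • ∏ i, M ζ (σ i) i :=
    funext fun ζ => Matrix.det_apply _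
  rw [h1]
  refine Finset.analyticAt_fun_sum _ fun σ _ => ?_
  have h2 : (fun ζ => Equiv.Perm.sign σ • ∏ i, M ζ (σ i) i)
      = fun ζ => ((Equiv.Perm.sign σ : ℤ) : ℂ) * ∏ i, M ζ (σ i) i := by
    funext ζ
    rw [Units.smul_def, zsmul_eq_mul]
  rw [h2]
  exact analyticAt_const.mul (Finset.analyticAt_fun_prod _ fun i _ => hM (σ i) i)


/-- Determinant of a matrix whose rows in `t` are `x`-multiples of basis vectors. -/
lemma det_eq_pow_mul_det_submatrix {R : Type*} [CommRing R] {n : ℕ}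
    (N : Matrix (Fin n) (Fin n) R) (t : Finset (Fin n)) (x : R)
    (ht : ∀ p ∈ t, ∀ q, N p q = if q = p then x else 0) :
    N.det = x ^ t.card *
      (N.submatrix (fun p : {p : Fin n // p ∉ t} => (p : Fin n))
        (fun p : {p : Fin n // p ∉ t} => (p : Fin n))).det := by
  classical
  let e : {p : Fin n // p ∈ t} ⊕ {p : Fin n // p ∉ t} ≃ Fin n :=
    Equiv.sumCompl (fun p => p ∈ t)
  rw [← Matrix.det_submatrix_equiv_self e N]
  rw [← Matrix.fromBlocks_toBlocks (N.submatrix e e)]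
  have h12 : (N.submatrix e e).toBlocks₁₂ = 0 := by
    ext p q
    simp only [Matrix.toBlocks₁₂, Matrix.of_apply, Matrix.submatrix_apply]
    have := ht p p.2 q
    simp only [Equiv.sumCompl_apply_inl, Equiv.sumCompl_apply_inr, e]
    rw [this]
    have : (q : Fin n) ≠ (p : Fin n) := by
      intro h
      exact q.2 (h ▸ p.2)
    simp [this, Matrix.zero_apply]
  rw [h12, Matrix.det_fromBlocks_zero₁₂]
  have h11 : (N.submatrix e e).toBlocks₁₁ = Matrix.diagonal (fun _ => x) := by
    ext p q
    simp only [Matrix.toBlocks₁₁, Matrix.of_apply, Matrix.submatrix_apply,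
      Equiv.sumCompl_apply_inl, e]
    rw [ht p p.2 q]
    by_cases h : p = q
    · subst h; simp
    · have hne : (q : Fin n) ≠ (p : Fin n) := fun hc => h (Subtype.ext hc.symm)
      rw [if_neg hne]
      exact (Matrix.diagonal_apply_ne _ h).symm
  rw [h11, Matrix.det_diagonal, Finset.prod_const]
  have hcard : (Finset.univ : Finset {p : Fin n // p ∈ t}).card = t.card := by
    simp [Finset.card_univ]
  rw [hcard]
  rfl

/-- The grand expansion of the characteristic polynomial of `A + z • W`. -/
lemma charpoly_expand {n : ℕ} (M Am : Matrix (Fin n) (Fin n) ℂ)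
    (w : Fin n → Fin n → ℂ) (z : ℂ) (hM : ∀ p q, M p q = Am p q + z * w p q) :
    M.charpoly = ∑ s : Finset (Fin n), ∑ t ∈ s.powerset,
      C ((-z) ^ sᶜ.card) * ((X : ℂ[X]) ^ t.card *
        C (Matrix.det (Matrix.of (fun p q : {p : Fin n // p ∉ t} =>
          if (p : Fin n) ∈ s then -Am p q else w p q)))) := by
  classical
  set u : Fin n → Fin n → ℂ[X] := fun p q => if q = p then X else 0 with hu
  set v : Fin n → Fin n → ℂ[X] := fun p q => -C (Am p q) with hv
  set wP : Fin n → Fin n → ℂ[X] := fun p q => C (w p q) with hwP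
  set f := (Matrix.detRowAlternating :
    (Fin n → ℂ[X]) [⋀^Fin n]→ₗ[ℂ[X]] ℂ[X]).toMultilinearMap with hf
  have hcoe : ∀ (m : Fin n → Fin n → ℂ[X]), f m = Matrix.det (Matrix.of m) := fun m => rfl
  have hrows : (M.charmatrix : Matrix (Fin n) (Fin n) ℂ[X])
      = ((u + v) + fun p => C (-z) • wP p : Fin n → Fin n → ℂ[X]) := by
    funext p q
    simp only [Matrix.charmatrix_apply, Pi.add_apply, hu, hv, hwP, Pi.smul_apply,
      smul_eq_mul, Matrix.diagonal_apply]
    rw [hM p q]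
    by_cases h : p = q
    · subst h; simp; try ring
    · rw [if_neg h, if_neg (fun hc : q = p => h hc.symm)]
      simp only [map_add, map_mul, map_neg]
      ring
  have hdet : M.charpoly = f ((u + v) + fun p => C (-z) • wP p) := by
    rw [hcoe]
    show (Matrix.charmatrix M).det = _
    rw [hrows]
    rfl
  rw [hdet, f.map_add_univ (u + v) (fun p => C (-z) • wP p)]
  refine Finset.sum_congr rfl fun s _ => ?_
  set m₀ : Fin n → Fin n → ℂ[X] := s.piecewise (u + v) wP with hm0
  have hvec : s.piecewise (u + v) (fun p => C (-z) • wP p)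
      = sᶜ.piecewise (fun i => C (-z) • m₀ i) m₀ := by
    funext i
    by_cases h : i ∈ s <;> simp [Finset.piecewise, h, hm0]
  rw [hvec, f.map_piecewise_smul (fun _ => C (-z)) m₀ sᶜ, Finset.prod_const]
  have hcards : sᶜ.card = (sᶜ.card : ℕ) := rfl
  have hm0eq : m₀ = s.piecewise (u + s.piecewise v wP) (s.piecewise v wP) := by
    funext i
    by_cases h : i ∈ s <;> simp [Finset.piecewise, h, hm0]
  have hm0exp : f m₀ = ∑ t ∈ s.powerset, f (t.piecewise u (s.piecewise v wP)) := by
    rw [hm0eq]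
    exact f.map_piecewise_add u (s.piecewise v wP) s
  rw [hm0exp, Finset.smul_sum]
  refine Finset.sum_congr rfl fun t ht => ?_
  have htsub : t ⊆ s := Finset.mem_powerset.1 ht
  set N : Matrix (Fin n) (Fin n) ℂ[X] :=
    Matrix.of (t.piecewise u (s.piecewise v wP)) with hN
  have hNdet : f (t.piecewise u (s.piecewise v wP)) = N.det := rfl
  rw [hNdet]
  have hrow : ∀ p ∈ t, ∀ q, N p q = if q = p then X else 0 := by
    intro p hp q
    simp only [hN, Matrix.of_apply, Finset.piecewise_eq_of_mem _ _ _ hp, hu]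
  rw [det_eq_pow_mul_det_submatrix N t X hrow]
  have hsub : N.submatrix (fun p : {p : Fin n // p ∉ t} => (p : Fin n))
        (fun p : {p : Fin n // p ∉ t} => (p : Fin n))
      = (Matrix.of (fun p q : {p : Fin n // p ∉ t} =>
          if (p : Fin n) ∈ s then -Am p q else w p q)).map C := by
    ext p q
    simp only [Matrix.submatrix_apply, Matrix.map_apply, Matrix.of_apply, hN,
      Finset.piecewise_eq_of_notMem _ _ _ p.2]
    by_cases h : (p : Fin n) ∈ s
    · rw [Finset.piecewise_eq_of_mem _ _ _ h, if_pos h, hv, map_neg]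
    · rw [Finset.piecewise_eq_of_notMem _ _ _ h, if_neg h, hwP]
  rw [hsub, ← RingHom.mapMatrix_apply, ← RingHom.map_det, smul_eq_mul, ← map_pow]

/-- Sum of `getD` over the range equals list sum. -/
lemma sum_getD_range : ∀ (L : List ℕ), ∑ k ∈ Finset.range L.length, L.getD k 0 = L.sum := by
  intro L
  induction L with
  | nil => simp
  | cons a L ih =>
    rw [List.length_cons, Finset.sum_range_succ']
    simp only [List.getD_cons_succ, List.getD_cons_zero, List.sum_cons]
    rw [ih]
    ring

lemma take_sum_getD (L : List ℕ) (u : ℕ) (hu : u ≤ L.length) :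
    (L.take u).sum = ∑ k ∈ Finset.range u, L.getD k 0 := by
  have h1 : (L.take u).length = u := by simp [hu]
  rw [← sum_getD_range (L.take u), h1]
  refine Finset.sum_congr rfl fun k hk => ?_
  have hk' := Finset.mem_range.1 hk
  rw [List.getD_eq_getElem _ _ (by omega), List.getD_eq_getElem _ _ (by omega)]
  exact List.getElem_take ..

end Statement3Aux

section Statement3Bridge

open Polynomial

open scoped Classical in
lemma jordan_dIdx_eq {n : ℕ} (A : Matrix (Fin n) (Fin n) ℂ)
    (L : List ℕ) (hLpos : ∀ x ∈ L, 0 < x) (hLsum : L.sum = n)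
    (hsup : ∀ i j : Fin n, (j : ℕ) = (i : ℕ) + 1 →
      A i j = if (∃ t, 0 < t ∧ t < L.length ∧ (L.take t).sum = (j : ℕ)) then 0 else 1)
    (i1 : ℕ) (hi10 : 0 < i1) (hi1n : i1 ≤ n) :
    dIdx A i1 = 1 + ((Finset.Ico 1 L.length).filter
      (fun u => n - i1 + 1 ≤ ∑ k ∈ Finset.range u, L.getD k 0)).card := by
  classical
  set len := L.length with hlen
  set P : ℕ → ℕ := fun u => ∑ k ∈ Finset.range u, L.getD k 0 with hP
  have hPu : ∀ u, P u = ∑ k ∈ Finset.range u, L.getD k 0 := fun _ => rfl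
  have Pmono : ∀ a b, a ≤ b → P a ≤ P b := fun a b hab =>
    Finset.sum_le_sum_of_subset (Finset.range_subset_range.2 hab)
  have Psucc : ∀ a, P (a + 1) = P a + L.getD a 0 := fun a => Finset.sum_range_succ _ a
  have hlpos : ∀ k, k < len → 0 < L.getD k 0 := by
    intro k hk
    rw [List.getD_eq_getElem _ _ hk]
    exact hLpos _ (List.getElem_mem hk)
  have Pstrict : ∀ a b, a < b → a < len → P a < P b := by
    intro a b hab halen
    have h1 : P a + L.getD a 0 ≤ P b := by
      rw [← Psucc a]; exact Pmono _ _ hab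
    have := hlpos a halen
    omega
  have Plen : P len = n := by
    rw [show P len = ∑ k ∈ Finset.range L.length, L.getD k 0 from rfl, sum_getD_range]
    exact hLsum
  have Ptake : ∀ u, u ≤ len → (L.take u).sum = P u := fun u hu => take_sum_getD L u hu
  rw [dIdx]
  congr 1
  refine (Finset.card_bij (fun u _ => P u + 1) ?_ ?_ ?_).symm
  · -- maps into the Icc filter
    intro u hu
    have hu' := Finset.mem_filter.1 hu
    have huIco := Finset.mem_Ico.1 hu'.1
    have hP1 : n - i1 + 1 ≤ P u := hu'.2
    have hPu1 : 1 ≤ P u := by omega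
    have hPun : P u < n := by
      rw [← Plen]; exact Pstrict u len huIco.2 huIco.2
    show P u + 1 ∈ _
    refine Finset.mem_filter.2 ⟨Finset.mem_Icc.2 ⟨by omega, by omega⟩, ?_⟩
    intro h1 h2
    have hij : ((⟨P u + 1 - 1, h2⟩ : Fin n) : ℕ) = ((⟨P u + 1 - 2, h1⟩ : Fin n) : ℕ) + 1 := by
      show P u + 1 - 1 = (P u + 1 - 2) + 1
      omega
    rw [hsup _ _ hij]
    rw [if_pos]
    refine ⟨u, huIco.1, huIco.2, ?_⟩
    rw [Ptake u (le_of_lt huIco.2)]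
    show P u = P u + 1 - 1
    omega
  · -- injective
    intro u₁ hu₁ u₂ hu₂ he
    have he' : P u₁ + 1 = P u₂ + 1 := he
    have h₁ := Finset.mem_Ico.1 (Finset.mem_filter.1 hu₁).1
    have h₂ := Finset.mem_Ico.1 (Finset.mem_filter.1 hu₂).1
    by_contra hne
    rcases Nat.lt_or_ge u₁ u₂ with h | h
    · have := Pstrict u₁ u₂ h h₁.2
      omega
    · have hlt : u₂ < u₁ := by omega
      have := Pstrict u₂ u₁ hlt h₂.2
      omega
  · -- surjective
    intro j hj
    have hj' := Finset.mem_filter.1 hj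
    have hjIcc := Finset.mem_Icc.1 hj'.1
    have hj2 : 2 ≤ j := by omega
    have hn2 : 2 ≤ n := by omega
    have h1 : j - 2 < n := by omega
    have h2 : j - 1 < n := by omega
    have hzero := hj'.2 h1 h2
    have hij : ((⟨j - 1, h2⟩ : Fin n) : ℕ) = ((⟨j - 2, h1⟩ : Fin n) : ℕ) + 1 := by
      show j - 1 = (j - 2) + 1
      omega
    rw [hsup _ _ hij] at hzero
    by_cases hex : ∃ t, 0 < t ∧ t < L.length ∧ (L.take t).sum = ((⟨j - 1, h2⟩ : Fin n) : ℕ)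
    · obtain ⟨u, hu0, hulen, husum⟩ := hex
      have husum' : P u = j - 1 := by
        rw [← Ptake u (le_of_lt hulen), husum]
      refine ⟨u, ?_, ?_⟩
      · refine Finset.mem_filter.2 ⟨Finset.mem_Ico.2 ⟨hu0, hulen⟩, ?_⟩
        show n - i1 + 1 ≤ P u
        omega
      · show P u + 1 = j
        omega
    · rw [if_neg hex] at hzero
      exact absurd hzero one_ne_zero

lemma jordan_comb {n : ℕ} (A : Matrix (Fin n) (Fin n) ℂ) (hA : IsSingleJordan A 0)
    (i1 : ℕ) (hi10 : 0 < i1) (hi1n : i1 ≤ n)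
    (s t : Finset (Fin n)) (hts : t ⊆ s) (htc : t.card = n - i1)
    (hall : ∀ p ∈ s \ t, ∃ q, q ∉ t ∧ A p q ≠ 0) :
    (s \ t).card + dIdx A i1 ≤ i1 := by
  classical
  obtain ⟨hdiag, hoff, L, hLpos, hLsum, hLsort, hsup⟩ := hA
  set len := L.length with hlen
  set ℓ : ℕ → ℕ := fun k => L.getD k 0 with hl
  have hlpos : ∀ k, k < len → 0 < ℓ k := by
    intro k hk
    rw [hl]
    simp only []
    rw [List.getD_eq_getElem _ _ hk]
    exact hLpos _ (List.getElem_mem hk)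
  have hlmono : ∀ a b, a ≤ b → b < len → ℓ a ≤ ℓ b := by
    intro a b hab hb
    rw [hl]
    simp only []
    rw [List.getD_eq_getElem _ _ (by omega), List.getD_eq_getElem _ _ hb]
    have := List.Pairwise.rel_get_of_le hLsort
      (a := ⟨a, by omega⟩) (b := ⟨b, hb⟩) (by exact hab)
    simpa [List.get_eq_getElem] using this
  have hsum : ∑ k ∈ Finset.range len, ℓ k = n := by
    rw [hl]
    simp only []
    rw [sum_getD_range]
    exact hLsum
  set S : Finset ℕ := tᶜ.image (fun p : Fin n => (p : ℕ)) with hS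
  set T : Finset ℕ := (s \ t).image (fun p : Fin n => (p : ℕ)) with hT
  have hval : Function.Injective (fun p : Fin n => (p : ℕ)) := Fin.val_injective
  have hScard : S.card = i1 := by
    rw [hS, Finset.card_image_of_injective _ hval]
    have h1 : tᶜ.card = n - t.card := by
      rw [Finset.card_compl, Fintype.card_fin]
    omega
  have hTcard : T.card = (s \ t).card := Finset.card_image_of_injective _ hval
  have hTS : T ⊆ S := by
    refine Finset.image_subset_image ?_
    intro p hp
    exact Finset.mem_compl.2 (Finset.mem_sdiff.1 hp).2
  have hSn : ∀ p ∈ S, p < n := by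
    intro p hp
    obtain ⟨p₀, _, rfl⟩ := Finset.mem_image.1 hp
    exact p₀.2
  have hgood : ∀ p ∈ T, p + 1 ∈ S ∧
      ¬ ∃ u, 0 < u ∧ u < len ∧ (∑ k ∈ Finset.range u, ℓ k) = p + 1 := by
    intro p hp
    obtain ⟨p₀, hp₀, rfl⟩ := Finset.mem_image.1 hp
    obtain ⟨q, hqt, hqA⟩ := hall p₀ hp₀
    have hq1 : (q : ℕ) = (p₀ : ℕ) + 1 := by
      by_contra hne
      by_cases heq : (q : ℕ) = (p₀ : ℕ)
      · have : q = p₀ := Fin.ext heq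
        subst this
        exact hqA (hdiag q)
      · exact hqA (hoff p₀ q heq hne)
    constructor
    · exact Finset.mem_image.2 ⟨q, Finset.mem_compl.2 hqt, hq1⟩
    · rintro ⟨u, hu0, hulen, husum⟩
      have hthis := hsup p₀ q hq1
      have hw : (L.take u).sum = (q : ℕ) := by
        rw [take_sum_getD L u (le_of_lt hulen), hq1]
        exact husum
      rw [if_pos ⟨u, hu0, hulen, hw⟩] at hthis
      exact hqA hthis
  have core := comb_core n len ℓ hlpos hlmono hsum i1 hi10 hi1n S T hSn hScard hTS hgood
  simp only [hl, hlen] at core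
  rw [jordan_dIdx_eq A L hLpos hLsum hsup i1 hi10 hi1n]
  omega

end Statement3Bridge

noncomputable def Kmat {n : ℕ} (Am : Matrix (Fin n) (Fin n) ℂ) (ψ : Fin n → Fin n → ℂ → ℂ)
    (s t : Finset (Fin n)) (ζ : ℂ) : Matrix {p : Fin n // p ∉ t} {p : Fin n // p ∉ t} ℂ :=
  Matrix.of (fun p q => if (p : Fin n) ∈ s then -Am (p : Fin n) (q : Fin n)
    else ψ (p : Fin n) (q : Fin n) ζ)

/-- if `Φ : D → Ω_n` is holomorphic with `Φ(0) = A` a single-eigenvalue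
Jordan matrix with eigenvalue `0`, then `(π∘Φ)_i(ζ) = O(ζ^{d_i(A)})`. -/
theorem statement3 (n : ℕ) (A : Matrix (Fin n) (Fin n) ℂ) (hA : IsSingleJordan A 0)
    (Φ : ℂ → Matrix (Fin n) (Fin n) ℂ)
    (hΦ : ∀ i k, DifferentiableOn ℂ (fun ζ => Φ ζ i k) unitDisc)
    (hΦΩ : Set.MapsTo Φ unitDisc (SpectralBall n)) (hΦ0 : Φ 0 = A) :
    ∀ i : Fin n,
      VanishesToOrder (fun ζ => piCoef n (Φ ζ) i) 0 (dIdx A ((i : ℕ) + 1)) := by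
  classical
  intro i
  set i1 := (i : ℕ) + 1 with hi1
  have hi10 : 0 < i1 := Nat.succ_pos _
  have hi1n : i1 ≤ n := i.isLt
  set d := dIdx A i1 with hd
  set ψ : Fin n → Fin n → ℂ → ℂ := fun p q => dslope (fun ζ => Φ ζ p q) 0 with hψ
  have hentry : ∀ p q : Fin n, AnalyticAt ℂ (fun ζ => Φ ζ p q) 0 := fun p q =>
    (hΦ p q).analyticAt (Metric.isOpen_ball.mem_nhds (by simp [unitDisc]))
  have hψana : ∀ p q, AnalyticAt ℂ (ψ p q) 0 := fun p q => analyticAt_dslope (hentry p q)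
  have hfac : ∀ ζ p q, Φ ζ p q = A p q + ζ * ψ p q ζ := by
    intro ζ p q
    have h2 : ψ p q ζ = dslope (fun ζ => Φ ζ p q) 0 ζ := rfl
    have h1 := sub_smul_dslope (fun ζ => Φ ζ p q) 0 ζ
    simp only [sub_zero, smul_eq_mul] at h1
    rw [h2, h1]
    simp only [hΦ0]
    ring
  -- pointwise coefficient formula
  have hcoeff : ∀ ζ, piCoef n (Φ ζ) i =
      (-1 : ℂ) ^ i1 * ∑ s : Finset (Fin n), ∑ t ∈ s.powerset,
        ((-ζ) ^ sᶜ.card * if n - i1 = t.card then (Kmat A ψ s t ζ).det else 0) := by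
    intro ζ
    have hexp : (Φ ζ).charpoly = ∑ s : Finset (Fin n), ∑ t ∈ s.powerset,
        Polynomial.C ((-ζ) ^ sᶜ.card) * ((Polynomial.X : Polynomial ℂ) ^ t.card *
          Polynomial.C ((Kmat A ψ s t ζ).det)) :=
      charpoly_expand (Φ ζ) A (fun p q => ψ p q ζ) ζ (fun p q => hfac ζ p q)
    show (-1 : ℂ) ^ i1 * ((Φ ζ).charpoly).coeff (n - i1) = _
    rw [hexp]
    congr 1
    rw [Polynomial.finset_sum_coeff]
    refine Finset.sum_congr rfl fun s _ => ?_
    rw [Polynomial.finset_sum_coeff]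
    refine Finset.sum_congr rfl fun t _ => ?_
    rw [Polynomial.coeff_C_mul,
      mul_comm ((Polynomial.X : Polynomial ℂ) ^ t.card) (Polynomial.C ((Kmat A ψ s t ζ).det)),
      Polynomial.coeff_C_mul, Polynomial.coeff_X_pow]
    split_ifs with h <;> ring
  -- the analytic cofactor
  set H : ℂ → ℂ := fun ζ => (-1 : ℂ) ^ i1 * ∑ s : Finset (Fin n), ∑ t ∈ s.powerset,
      (if d ≤ sᶜ.card ∧ n - i1 = t.card
        then (-1 : ℂ) ^ sᶜ.card * ζ ^ (sᶜ.card - d) * (Kmat A ψ s t ζ).det else 0) with hH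
  have hHana : AnalyticAt ℂ H 0 := by
    rw [hH]
    refine AnalyticAt.mul analyticAt_const ?_
    refine Finset.analyticAt_fun_sum _ fun s _ => ?_
    refine Finset.analyticAt_fun_sum _ fun t _ => ?_
    by_cases hc : d ≤ sᶜ.card ∧ n - i1 = t.card
    · have he : (fun ζ => if d ≤ sᶜ.card ∧ n - i1 = t.card
          then (-1 : ℂ) ^ sᶜ.card * ζ ^ (sᶜ.card - d) * (Kmat A ψ s t ζ).det else 0)
          = fun ζ => (-1 : ℂ) ^ sᶜ.card * ζ ^ (sᶜ.card - d) * (Kmat A ψ s t ζ).det := by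
        funext ζ; rw [if_pos hc]
      rw [he]
      refine AnalyticAt.mul (AnalyticAt.mul analyticAt_const ?_) ?_
      · exact AnalyticAt.pow analyticAt_id _
      · refine analyticAt_det _ fun p q => ?_
        by_cases hps : (p : Fin n) ∈ s
        · have : (fun ζ => Kmat A ψ s t ζ p q) = fun _ => -A (p : Fin n) (q : Fin n) := by
            funext ζ; show (if (p : Fin n) ∈ s then _ else _) = _; rw [if_pos hps]
          rw [this]; exact analyticAt_const
        · have : (fun ζ => Kmat A ψ s t ζ p q) = ψ (p : Fin n) (q : Fin n) := by
            funext ζ; show (if (p : Fin n) ∈ s then _ else _) = _; rw [if_neg hps]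
          rw [this]; exact hψana _ _
    · have he : (fun ζ => if d ≤ sᶜ.card ∧ n - i1 = t.card
          then (-1 : ℂ) ^ sᶜ.card * ζ ^ (sᶜ.card - d) * (Kmat A ψ s t ζ).det else 0)
          = fun _ => (0 : ℂ) := by
        funext ζ; rw [if_neg hc]
      rw [he]
      exact analyticAt_const
  -- the factorization
  have hfactor : ∀ ζ, piCoef n (Φ ζ) i = ζ ^ d * H ζ := by
    intro ζ
    rw [hcoeff ζ, hH]
    have hterm : ∀ s : Finset (Fin n), ∀ t ∈ s.powerset,
        ((-ζ) ^ sᶜ.card * if n - i1 = t.card then (Kmat A ψ s t ζ).det else 0)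
        = ζ ^ d * (if d ≤ sᶜ.card ∧ n - i1 = t.card
            then (-1 : ℂ) ^ sᶜ.card * ζ ^ (sᶜ.card - d) * (Kmat A ψ s t ζ).det else 0) := by
      intro s t ht
      have htsub : t ⊆ s := Finset.mem_powerset.1 ht
      by_cases h1 : n - i1 = t.card
      · by_cases h2 : d ≤ sᶜ.card
        · rw [if_pos h1, if_pos ⟨h2, h1⟩, neg_pow]
          have hsplit : (ζ : ℂ) ^ (sᶜ.card) = ζ ^ d * ζ ^ (sᶜ.card - d) := by
            rw [← pow_add]
            congr 1
            omega
          rw [hsplit]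
          ring
        · rw [if_pos h1, if_neg (fun hc => h2 hc.1), mul_zero]
          have hex : ∃ p, (p ∈ s \ t) ∧ ∀ q : Fin n, q ∉ t → A p q = 0 := by
            by_contra hno
            push_neg at hno
            have hcomb := jordan_comb A hA i1 hi10 hi1n s t htsub h1.symm
              (fun p hp => hno p hp)
            have hc1 : (s \ t).card = s.card - t.card := Finset.card_sdiff_of_subset htsub
            have hc2 : sᶜ.card = n - s.card := by
              rw [Finset.card_compl, Fintype.card_fin]
            have hc3 : s.card ≤ n := by
              have := Finset.card_le_univ s
              simpa using this
            have hc4 : t.card ≤ s.card := Finset.card_le_card htsub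
            omega
          obtain ⟨p, hp, hrow⟩ := hex
          have hpt : p ∉ t := (Finset.mem_sdiff.1 hp).2
          have hps : p ∈ s := (Finset.mem_sdiff.1 hp).1
          have hdet0 : (Kmat A ψ s t ζ).det = 0 := by
            apply Matrix.det_eq_zero_of_row_eq_zero (⟨p, hpt⟩ : {p : Fin n // p ∉ t})
            intro q
            have hentry' : Kmat A ψ s t ζ ⟨p, hpt⟩ q
                = if p ∈ s then -A p (q : Fin n) else ψ p (q : Fin n) ζ := rfl
            rw [hentry', if_pos hps, hrow (q : Fin n) q.2, neg_zero]
          rw [hdet0, mul_zero]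
      · rw [if_neg h1, if_neg (fun hc => h1 hc.2), mul_zero, mul_zero]
    rw [Finset.sum_congr rfl (fun s _ => Finset.sum_congr rfl (hterm s))]
    simp only [← Finset.mul_sum]
    ring
  intro j hj
  exact vanishesToOrder_of_factor (fun ζ => piCoef n (Φ ζ) i) d H hHana hfactor j hj
end

section
/- Let ω ⊆ ℂ be a neighborhood of 0 and let m_1, m_2 ≥ 1 be integers, m_0 = m_1 + m_2. For i = 0, 1, 2 let P^i_ζ(t) = Σ_{j=0}^{m_i} a^i_j(ζ) t^j be polynomials in t whose coefficients a^i_j are holomorphic functions of ζ on ω. Assume that P^0_ζ(t) = P^1_ζ(t)·P^2_ζ(t) for all ζ ∈ ω, that P^1_0(t) = t^{m_1}, and that a^2_0(0) ≠ 0. Let k_0 ≥ k_1 ≥ ⋯ ≥ k_{m_1−1} be positive integers. Then a^0_j(ζ) = O(ζ^{k_j}) for all 0 ≤ j ≤ m_1 − 1 if and only if a^1_j(ζ) = O(ζ^{k_j}) for all 0 ≤ j ≤ m_1 − 1. -/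
open Polynomial

open Filter Function FormalMultilinearSeries
open scoped Topology

namespace Statement5Aux

/-- `g(ζ) = O(ζ^d)` at `0` in factored form. -/
def OB (g : ℂ → ℂ) (d : ℕ) : Prop :=
  ∃ h : ℂ → ℂ, AnalyticAt ℂ h 0 ∧ ∀ᶠ z in 𝓝 (0:ℂ), g z = z ^ d * h z

lemma iteratedDeriv_eq_coeff {f : ℂ → ℂ} {p : FormalMultilinearSeries ℂ ℂ ℂ}
    (hp : HasFPowerSeriesAt f p 0) (i : ℕ) :
    iteratedDeriv i f 0 = (i.factorial : ℂ) * p.coeff i := by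
  obtain ⟨r, hr⟩ := hp
  have h := hr.factorial_smul (1 : ℂ) i
  rw [iteratedDeriv_eq_iteratedFDeriv, ← h, nsmul_eq_mul]
  rfl

lemma van_iff_coeff {f : ℂ → ℂ} {p : FormalMultilinearSeries ℂ ℂ ℂ}
    (hp : HasFPowerSeriesAt f p 0) (d : ℕ) :
    (∀ i < d, iteratedDeriv i f 0 = 0) ↔ ∀ i < d, p.coeff i = 0 := by
  refine forall₂_congr fun i _ => ?_
  rw [iteratedDeriv_eq_coeff hp, mul_eq_zero]
  simp [Nat.factorial_ne_zero]

lemma van_to_OB {f : ℂ → ℂ} (hf : AnalyticAt ℂ f 0) {d : ℕ}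
    (hv : ∀ i < d, iteratedDeriv i f 0 = 0) : OB f d := by
  obtain ⟨p, hp⟩ := hf
  have hc : ∀ k < d, p.coeff k = 0 := (van_iff_coeff hp d).mp hv
  refine ⟨(swap dslope 0)^[d] f, ⟨_, hp.has_fpower_series_iterate_dslope_fslope d⟩, ?_⟩
  have hq := hasFPowerSeriesAt_iff'.mp (hp.has_fpower_series_iterate_dslope_fslope d)
  filter_upwards [hq, hasFPowerSeriesAt_iff'.mp hp] with x hx1 hx2
  obtain ⟨s, hs1, hs2⟩ := HasSum.exists_hasSum_smul_of_apply_eq_zero hx2 hc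
  simp only [sub_zero] at hs1 hs2 hx1
  simp only [FormalMultilinearSeries.coeff_iterate_fslope] at hx1
  rw [← hs1, hx1.unique hs2]
  simp [smul_eq_mul]

lemma ofScalars_coeff (c : ℕ → ℂ) (n : ℕ) :
    (FormalMultilinearSeries.ofScalars ℂ c).coeff n = c n := by
  simp [FormalMultilinearSeries.coeff, FormalMultilinearSeries.ofScalars, Pi.one_def,
    List.ofFn_const, List.prod_replicate]

lemma OB_to_van {f : ℂ → ℂ} {d : ℕ} (h : OB f d) :
    ∀ i < d, iteratedDeriv i f 0 = 0 := by
  obtain ⟨g, hg, heq⟩ := h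
  obtain ⟨q, hq⟩ := hg
  set c : ℕ → ℂ := fun n => if d ≤ n then q.coeff (n - d) else 0 with hcdef
  have hq' : HasFPowerSeriesAt f (FormalMultilinearSeries.ofScalars ℂ c) 0 := by
    rw [hasFPowerSeriesAt_iff]
    have hg' := hasFPowerSeriesAt_iff.mp hq
    filter_upwards [hg', heq] with z hz1 hz2
    have h1 : HasSum (fun n => z ^ (n + d) * q.coeff n) (z ^ d * g (0 + z)) := by
      have := hz1.mul_left (z ^ d)
      simpa [smul_eq_mul, pow_add, mul_comm, mul_assoc, mul_left_comm] using this
    have h2 : HasSum (fun n => z ^ n • (FormalMultilinearSeries.ofScalars ℂ c).coeff n)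
        (z ^ d * g (0 + z)) := by
      apply (hasSum_nat_add_iff' d).mp
      have hsum0 : (∑ i ∈ Finset.range d,
          z ^ i • (FormalMultilinearSeries.ofScalars ℂ c).coeff i) = 0 := by
        refine Finset.sum_eq_zero fun i hi => ?_
        rw [ofScalars_coeff]
        simp [hcdef, Nat.not_le.mpr (Finset.mem_range.mp hi)]
      rw [hsum0, sub_zero]
      refine h1.congr_fun fun n => ?_
      rw [ofScalars_coeff]
      simp [hcdef, smul_eq_mul, add_comm]
    rw [zero_add] at h2 ⊢
    rwa [hz2]
  refine (van_iff_coeff hq' d).mpr fun i hi => ?_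
  rw [ofScalars_coeff]
  simp [hcdef, Nat.not_le.mpr hi]

lemma OB.congr {f g : ℂ → ℂ} {d : ℕ} (h : OB g d) (he : ∀ᶠ z in 𝓝 (0:ℂ), f z = g z) :
    OB f d := by
  obtain ⟨h₀, ha, heq⟩ := h
  exact ⟨h₀, ha, by filter_upwards [heq, he] with z h1 h2 using h2.trans h1⟩

lemma OB.mono {f : ℂ → ℂ} {d d' : ℕ} (h : OB f d) (hd : d' ≤ d) : OB f d' := by
  obtain ⟨h₀, ha, heq⟩ := h
  refine ⟨fun z => z ^ (d - d') * h₀ z, ((analyticAt_id.pow _).mul ha), ?_⟩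
  filter_upwards [heq] with z hz
  rw [hz, ← mul_assoc, ← pow_add, Nat.add_sub_cancel' hd]

lemma OB.add {f g : ℂ → ℂ} {d : ℕ} (hf : OB f d) (hg : OB g d) :
    OB (fun z => f z + g z) d := by
  obtain ⟨h₁, ha₁, he₁⟩ := hf
  obtain ⟨h₂, ha₂, he₂⟩ := hg
  refine ⟨fun z => h₁ z + h₂ z, ha₁.add ha₂, ?_⟩
  filter_upwards [he₁, he₂] with z hz1 hz2
  rw [hz1, hz2]; ring

lemma OB.neg {f : ℂ → ℂ} {d : ℕ} (hf : OB f d) : OB (fun z => -f z) d := by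
  obtain ⟨h₁, ha₁, he₁⟩ := hf
  exact ⟨fun z => -h₁ z, ha₁.neg, by filter_upwards [he₁] with z hz; rw [hz]; ring⟩

lemma OB.zero {d : ℕ} : OB (fun _ => (0:ℂ)) d :=
  ⟨fun _ => 0, analyticAt_const, by filter_upwards with z; ring⟩

lemma OB.sum {s : Finset ℕ} {f : ℕ → ℂ → ℂ} {d : ℕ} (h : ∀ p ∈ s, OB (f p) d) :
    OB (fun z => ∑ p ∈ s, f p z) d := by
  classical
  induction s using Finset.induction_on with
  | empty => simpa using OB.zero
  | insert a s' hx ih =>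
    simp only [Finset.sum_insert hx]
    exact (h a (Finset.mem_insert_self a s')).add
      (ih fun p hp => h p (Finset.mem_insert_of_mem hp))

lemma OB.mul_analytic {f u : ℂ → ℂ} {d : ℕ} (hf : OB f d) (hu : AnalyticAt ℂ u 0) :
    OB (fun z => f z * u z) d := by
  obtain ⟨h₁, ha₁, he₁⟩ := hf
  refine ⟨fun z => h₁ z * u z, ha₁.mul hu, ?_⟩
  filter_upwards [he₁] with z hz
  rw [hz]; ring

lemma OB.of_mul {f u : ℂ → ℂ} {d : ℕ} (h : OB (fun z => f z * u z) d)
    (hu : AnalyticAt ℂ u 0) (hu0 : u 0 ≠ 0) : OB f d := by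
  obtain ⟨h₁, ha₁, he₁⟩ := h
  refine ⟨fun z => h₁ z / u z, ha₁.div hu hu0, ?_⟩
  have hne : ∀ᶠ z in 𝓝 (0:ℂ), u z ≠ 0 := hu.continuousAt.eventually_ne hu0
  filter_upwards [he₁, hne] with z hz hz0
  field_simp
  linear_combination hz

end Statement5Aux


/-- vanishing orders of the low-degree coefficients pass between a product
polynomial `P⁰ = P¹·P²` and the factor `P¹`, when `P¹_0(t) = t^{m_1}` and `P²_0(0) ≠ 0`. -/
theorem statement5 (ω : Set ℂ) (hω : ω ∈ nhds (0 : ℂ))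
    (m1 m2 : ℕ) (hm1 : 1 ≤ m1) (hm2 : 1 ≤ m2)
    (a0 a1 a2 : ℕ → ℂ → ℂ)
    (ha0 : ∀ j ≤ m1 + m2, DifferentiableOn ℂ (a0 j) ω)
    (ha1 : ∀ j ≤ m1, DifferentiableOn ℂ (a1 j) ω)
    (ha2 : ∀ j ≤ m2, DifferentiableOn ℂ (a2 j) ω)
    (hprod : ∀ ζ ∈ ω, ∀ t : ℂ,
      (∑ j ∈ Finset.range (m1 + m2 + 1), a0 j ζ * t ^ j) =
        (∑ j ∈ Finset.range (m1 + 1), a1 j ζ * t ^ j) *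
        (∑ j ∈ Finset.range (m2 + 1), a2 j ζ * t ^ j))
    (hP10 : ∀ t : ℂ, (∑ j ∈ Finset.range (m1 + 1), a1 j 0 * t ^ j) = t ^ m1)
    (ha20 : a2 0 0 ≠ 0)
    (kk : ℕ → ℕ) (hkpos : ∀ j < m1, 0 < kk j)
    (hkmono : ∀ i j, i ≤ j → j < m1 → kk j ≤ kk i) :
    (∀ j < m1, VanishesToOrder (a0 j) 0 (kk j)) ↔
      (∀ j < m1, VanishesToOrder (a1 j) 0 (kk j)) := by
  classical
  set b2 : ℕ → ℂ → ℂ := fun q ζ => if q ≤ m2 then a2 q ζ else 0 with hb2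
  have hb2an : ∀ q, AnalyticAt ℂ (b2 q) 0 := by
    intro q
    by_cases h : q ≤ m2
    · have := (ha2 q h).analyticAt hω
      simpa [hb2, h] using this
    · simp only [hb2, h, if_false]
      exact analyticAt_const
  have hA1 : ∀ j, j < m1 → AnalyticAt ℂ (a1 j) 0 := fun j hj => (ha1 j hj.le).analyticAt hω
  have hA0 : ∀ j, j < m1 → AnalyticAt ℂ (a0 j) 0 := fun j hj =>
    (ha0 j (by omega)).analyticAt hω
  have key : ∀ j, j < m1 → ∀ ζ ∈ ω,
      a0 j ζ = ∑ p ∈ Finset.range (j+1), a1 p ζ * b2 (j-p) ζ := by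
    intro j hj ζ hζ
    set Q0 : Polynomial ℂ := ∑ i ∈ Finset.range (m1+m2+1), C (a0 i ζ) * X ^ i with hQ0
    set Q1 : Polynomial ℂ := ∑ i ∈ Finset.range (m1+1), C (a1 i ζ) * X ^ i with hQ1
    set Q2 : Polynomial ℂ := ∑ i ∈ Finset.range (m2+1), C (a2 i ζ) * X ^ i with hQ2
    have heval : ∀ t : ℂ, Q0.eval t = (Q1 * Q2).eval t := by
      intro t
      simp only [hQ0, hQ1, hQ2, eval_mul, eval_finset_sum, eval_C, eval_pow, eval_X]
      exact hprod ζ hζ t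
    have hQ : Q0 = Q1 * Q2 := Polynomial.funext heval
    have hc : ∀ (N : ℕ) (c : ℕ → ℂ) (i : ℕ),
        (∑ p ∈ Finset.range (N+1), C (c p) * X ^ p).coeff i = if i ≤ N then c i else 0 := by
      intro N c i
      rw [Polynomial.finset_sum_coeff]
      simp only [Polynomial.coeff_C_mul, Polynomial.coeff_X_pow, mul_ite, mul_one, mul_zero]
      rw [Finset.sum_ite_eq (Finset.range (N+1)) i c]
      simp [Finset.mem_range, Nat.lt_succ_iff]
    have h0 : a0 j ζ = Q0.coeff j := by
      rw [hQ0, hc]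
      simp [show j ≤ m1 + m2 by omega]
    rw [h0, hQ, Polynomial.coeff_mul, Finset.Nat.sum_antidiagonal_eq_sum_range_succ_mk]
    refine Finset.sum_congr rfl fun p hp => ?_
    have hpj : p ≤ j := Nat.lt_succ_iff.mp (Finset.mem_range.mp hp)
    rw [hQ1, hQ2, hc, hc]
    have hpm : p ≤ m1 := le_of_lt (lt_of_le_of_lt hpj hj)
    simp [hpm, hb2]
  have hkey : ∀ j, j < m1 → ∀ᶠ ζ in nhds (0:ℂ),
      a0 j ζ = ∑ p ∈ Finset.range (j+1), a1 p ζ * b2 (j-p) ζ :=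
    fun j hj => Filter.eventually_of_mem hω (key j hj)
  constructor
  · intro H
    have fwd : ∀ j, j < m1 → Statement5Aux.OB (a1 j) (kk j) := by
      intro j
      induction j using Nat.strong_induction_on with
      | _ j IH =>
        intro hj
        have h1 : Statement5Aux.OB (a0 j) (kk j) :=
          Statement5Aux.van_to_OB (hA0 j hj) (H j hj)
        have h2 : Statement5Aux.OB
            (fun ζ => ∑ p ∈ Finset.range j, a1 p ζ * b2 (j-p) ζ) (kk j) := by
          refine Statement5Aux.OB.sum fun p hp => ?_
          have hpj : p < j := Finset.mem_range.mp hp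
          exact ((IH p hpj (hpj.trans hj)).mono (hkmono p j hpj.le hj)).mul_analytic (hb2an _)
        have hsum : Statement5Aux.OB
            (fun ζ => a0 j ζ + -(∑ p ∈ Finset.range j, a1 p ζ * b2 (j-p) ζ)) (kk j) :=
          h1.add h2.neg
        have hmul : Statement5Aux.OB (fun ζ => a1 j ζ * b2 0 ζ) (kk j) := by
          refine hsum.congr ?_
          filter_upwards [hkey j hj] with ζ hζ
          rw [hζ, Finset.sum_range_succ, Nat.sub_self]
          ring
        refine hmul.of_mul (hb2an 0) ?_
        simpa [hb2] using ha20
    intro j hj i hi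
    exact Statement5Aux.OB_to_van ((fwd j hj).mono le_rfl) i hi
  · intro H j hj
    have hOB : Statement5Aux.OB (a0 j) (kk j) := by
      refine Statement5Aux.OB.congr ?_ (hkey j hj)
      refine Statement5Aux.OB.sum fun p hp => ?_
      have hpj : p ≤ j := Nat.lt_succ_iff.mp (Finset.mem_range.mp hp)
      exact ((Statement5Aux.van_to_OB (hA1 p (lt_of_le_of_lt hpj hj))
        (H p (lt_of_le_of_lt hpj hj))).mono (hkmono p j hpj hj)).mul_analytic (hb2an _)
    exact fun i hi => Statement5Aux.OB_to_van hOB i hi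
end

section
/- Let A = diag(B_1,…,B_s) ∈ M_n(ℂ) be a block Jordan matrix with block sizes m_1,…,m_s, and set n_i := m_1 + ⋯ + m_i for 1 ≤ i ≤ s. Let A′ ∈ M_n(ℂ) be the matrix with A′_{n_i, n_i+1} = 1 for 1 ≤ i ≤ s−1 and A′_{ij} = A_{ij} for all other pairs of indices (i,j). Then A′ is similar to A, i.e. there exists an invertible matrix P ∈ M_n(ℂ) with A′ = P^{−1} A P. -/
open Polynomial

open scoped Classical in
/-- the modified Jordan form `A'` of a block Jordan matrix `A` (obtained
by putting `1` at the positions `(n_i, n_i+1)`, `1 ≤ i ≤ s-1`) is similar to `A`. -/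
theorem statement6 (n s : ℕ) (m : Fin s → ℕ) (lam : Fin s → ℂ)
    (B : ∀ j : Fin s, Matrix (Fin (m j)) (Fin (m j)) ℂ)
    (A A' : Matrix (Fin n) (Fin n) ℂ) (hBJ : IsBlockJordan m lam B A)
    (hA' : ∀ i j : Fin n,
      A' i j =
        if (∃ t, 1 ≤ t ∧ t ≤ s - 1 ∧ (i : ℕ) + 1 = nsum m t ∧ (j : ℕ) = nsum m t)
        then 1 else A i j) :
    ∃ P : Matrix (Fin n) (Fin n) ℂ, IsUnit P.det ∧ A' = P⁻¹ * A * P := by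
  classical
  obtain ⟨hsum, hlaminj, hmpos, hSJ, hAblk, hAcross⟩ := hBJ
  -- basic facts about nsum
  have hns0 : nsum m 0 = 0 := by simp [nsum]
  have hnsmono : Monotone (nsum m) := by
    intro a b hab
    refine Finset.sum_le_sum_of_subset ?_
    intro j hj
    simp only [Finset.mem_filter, Finset.mem_univ, true_and] at hj ⊢
    omega
  have hnssucc : ∀ t (ht : t < s), nsum m (t + 1) = nsum m t + m ⟨t, ht⟩ := by
    intro t ht
    unfold nsum
    rw [show (Finset.univ.filter (fun j : Fin s => (j : ℕ) < t + 1))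
        = insert (⟨t, ht⟩ : Fin s) (Finset.univ.filter (fun j : Fin s => (j : ℕ) < t)) by
        ext j
        simp only [Finset.mem_insert, Finset.mem_filter, Finset.mem_univ, true_and, Fin.ext_iff]
        omega,
      Finset.sum_insert (by simp)]
    ring
  have hnss : ∀ t, s ≤ t → nsum m t = n := by
    intro t ht
    rw [← hsum]
    unfold nsum
    rw [Finset.filter_true_of_mem fun j _ => lt_of_lt_of_le j.2 ht]
  -- the block index function
  set blk : ℕ → ℕ := fun x => Nat.findGreatest (fun t => nsum m t ≤ x) s with hblkdef
  have hblk_le : ∀ x, blk x ≤ s := fun x => Nat.findGreatest_le s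
  have hblk_spec : ∀ x, nsum m (blk x) ≤ x := fun x =>
    Nat.findGreatest_spec (P := fun t => nsum m t ≤ x) (Nat.zero_le s) (show nsum m 0 ≤ x by rw [hns0]; exact Nat.zero_le x)
  have hblk_lt : ∀ x t, x < nsum m t → blk x < t := by
    intro x t h
    by_contra hc
    push_neg at hc
    exact absurd (le_trans (hnsmono hc) (hblk_spec x)) (by omega)
  have hblk_ge : ∀ x t, t ≤ s → nsum m t ≤ x → t ≤ blk x :=
    fun x t h1 h2 => Nat.le_findGreatest h1 h2
  have hblk_lt_s : ∀ x, x < n → blk x < s := fun x hx =>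
    hblk_lt x s (by rw [hnss s le_rfl]; exact hx)
  have hblk_succ : ∀ x, x < n → x < nsum m (blk x + 1) := by
    intro x hx
    by_cases h : blk x + 1 ≤ s
    · by_contra hc
      push_neg at hc
      exact Nat.findGreatest_is_greatest (Nat.lt_succ_self _) h hc
    · rw [hnss _ (by omega)]; exact hx
  have hblk_mono : ∀ x y : ℕ, x ≤ y → blk x ≤ blk y :=
    fun x y h => hblk_ge y (blk x) (hblk_le x) (le_trans (hblk_spec x) h)
  -- entrywise facts about A
  have hA0 : ∀ i k : Fin n, blk (i : ℕ) ≠ blk (k : ℕ) → A i k = 0 := by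
    intro i k hne
    exact hAcross i k ⟨blk (i : ℕ), hblk_lt_s _ i.2⟩ ⟨blk (k : ℕ), hblk_lt_s _ k.2⟩
      (fun h => hne (congrArg Fin.val h)) (hblk_spec _) (hblk_succ _ i.2)
      (hblk_spec _) (hblk_succ _ k.2)
  have hAdiag : ∀ i : Fin n, A i i = lam ⟨blk (i : ℕ), hblk_lt_s _ i.2⟩ := by
    intro i
    have h3 : blk (i : ℕ) < s := hblk_lt_s _ i.2
    have h1 : nsum m (blk (i : ℕ)) ≤ (i : ℕ) := hblk_spec _
    have h2 : (i : ℕ) < nsum m (blk (i : ℕ) + 1) := hblk_succ _ i.2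
    have h4 := hnssucc _ h3
    have ha : (i : ℕ) - nsum m (blk (i : ℕ)) < m ⟨blk (i : ℕ), h3⟩ := by omega
    have h5 : nsum m (blk (i : ℕ)) + ((i : ℕ) - nsum m (blk (i : ℕ))) < n := by
      have := i.2; omega
    have hB := hAblk ⟨blk (i : ℕ), h3⟩ ⟨_, ha⟩ ⟨_, ha⟩ h5 h5
    have hii : (⟨nsum m (blk (i : ℕ)) + ((i : ℕ) - nsum m (blk (i : ℕ))), h5⟩ : Fin n) = i :=
      Fin.ext (Nat.add_sub_cancel' h1)
    rw [hii] at hB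
    rw [hB]
    exact (hSJ _).1 _
  have hAne : ∀ i k : Fin n, (k : ℕ) ≠ (i : ℕ) → (k : ℕ) ≠ (i : ℕ) + 1 → A i k = 0 := by
    intro i k hk1 hk2
    by_cases hb : blk (i : ℕ) = blk (k : ℕ)
    · have h3 : blk (i : ℕ) < s := hblk_lt_s _ i.2
      have h1 : nsum m (blk (i : ℕ)) ≤ (i : ℕ) := hblk_spec _
      have h2 : (i : ℕ) < nsum m (blk (i : ℕ) + 1) := hblk_succ _ i.2
      have h1' : nsum m (blk (i : ℕ)) ≤ (k : ℕ) := by rw [hb]; exact hblk_spec _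
      have h2' : (k : ℕ) < nsum m (blk (i : ℕ) + 1) := by rw [hb]; exact hblk_succ _ k.2
      have h4 := hnssucc _ h3
      have ha : (i : ℕ) - nsum m (blk (i : ℕ)) < m ⟨blk (i : ℕ), h3⟩ := by omega
      have hbb : (k : ℕ) - nsum m (blk (i : ℕ)) < m ⟨blk (i : ℕ), h3⟩ := by omega
      have h5 : nsum m (blk (i : ℕ)) + ((i : ℕ) - nsum m (blk (i : ℕ))) < n := by
        have := i.2; omega
      have h6 : nsum m (blk (i : ℕ)) + ((k : ℕ) - nsum m (blk (i : ℕ))) < n := by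
        have := k.2; omega
      have hB := hAblk ⟨blk (i : ℕ), h3⟩ ⟨_, ha⟩ ⟨_, hbb⟩ h5 h6
      have hii : (⟨nsum m (blk (i : ℕ)) + ((i : ℕ) - nsum m (blk (i : ℕ))), h5⟩ : Fin n) = i :=
        Fin.ext (Nat.add_sub_cancel' h1)
      have hkk : (⟨nsum m (blk (i : ℕ)) + ((k : ℕ) - nsum m (blk (i : ℕ))), h6⟩ : Fin n) = k :=
        Fin.ext (Nat.add_sub_cancel' h1')
      rw [hii, hkk] at hB
      rw [hB]
      exact (hSJ _).2.1 _ _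
        (by show (k : ℕ) - nsum m (blk (i : ℕ)) ≠ (i : ℕ) - nsum m (blk (i : ℕ)); omega)
        (by show (k : ℕ) - nsum m (blk (i : ℕ)) ≠ (i : ℕ) - nsum m (blk (i : ℕ)) + 1; omega)
    · exact hA0 i k hb
  -- entrywise facts about A'
  have hA'ne : ∀ i k : Fin n, (k : ℕ) ≠ (i : ℕ) → (k : ℕ) ≠ (i : ℕ) + 1 → A' i k = 0 := by
    intro i k hk1 hk2
    rw [hA' i k, if_neg, hAne i k hk1 hk2]
    rintro ⟨t, -, -, ht1, ht2⟩
    omega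
  have hA'diag : ∀ k : Fin n, A' k k = lam ⟨blk (k : ℕ), hblk_lt_s _ k.2⟩ := by
    intro k
    rw [hA' k k, if_neg, hAdiag k]
    rintro ⟨t, -, -, ht1, ht2⟩
    omega
  -- the submodule of strictly block upper triangular matrices
  let U : Submodule ℂ (Matrix (Fin n) (Fin n) ℂ) :=
    { carrier := { X | ∀ i k : Fin n, blk (k : ℕ) ≤ blk (i : ℕ) → X i k = 0 }
      add_mem' := fun {X Y} hX hY i k h => by
        rw [Matrix.add_apply, hX i k h, hY i k h, add_zero]
      zero_mem' := fun i k h => rfl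
      smul_mem' := fun c {X} hX i k h => by rw [Matrix.smul_apply, hX i k h, smul_zero] }
  have hmemU : ∀ X : Matrix (Fin n) (Fin n) ℂ,
      X ∈ U ↔ ∀ i k : Fin n, blk (k : ℕ) ≤ blk (i : ℕ) → X i k = 0 := fun X => Iff.rfl
  have hLmem : ∀ X : Matrix (Fin n) (Fin n) ℂ, X ∈ U → A * X - X * A' ∈ U := by
    intro X hX
    rw [hmemU] at hX ⊢
    intro i k hik
    rw [Matrix.sub_apply, Matrix.mul_apply, Matrix.mul_apply]
    have h1 : ∀ t : Fin n, A i t * X t k = 0 := by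
      intro t
      by_cases hx : X t k = 0
      · rw [hx, mul_zero]
      · have ht : blk (t : ℕ) < blk (k : ℕ) := by
          by_contra hc
          exact hx (hX t k (by omega))
        rw [hA0 i t (by omega), zero_mul]
    have h2 : ∀ t : Fin n, X i t * A' t k = 0 := by
      intro t
      by_cases hx : A' t k = 0
      · rw [hx, mul_zero]
      · have htk : (t : ℕ) ≤ (k : ℕ) := by
          by_contra hc
          exact hx (hA'ne t k (by omega) (by omega))
        have := hblk_mono _ _ htk
        rw [hX i t (by omega), zero_mul]
    simp only [h1, h2, Finset.sum_const_zero, sub_zero]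
  -- the Sylvester operator on U
  let L : U →ₗ[ℂ] U :=
    { toFun := fun X => ⟨A * X.1 - X.1 * A', hLmem X.1 X.2⟩
      map_add' := fun X Y => by
        apply Subtype.ext
        show A * (X.1 + Y.1) - (X.1 + Y.1) * A' = A * X.1 - X.1 * A' + (A * Y.1 - Y.1 * A')
        rw [mul_add, add_mul]
        abel
      map_smul' := fun c X => by
        apply Subtype.ext
        show A * (c • X.1) - (c • X.1) * A' = c • (A * X.1 - X.1 * A')
        rw [mul_smul_comm, smul_mul_assoc, smul_sub] }
  -- injectivity of L via an entrywise induction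
  have hinj : Function.Injective L := by
    rw [← LinearMap.ker_eq_bot, eq_bot_iff]
    intro X hX0
    have hcomm : A * X.1 = X.1 * A' := by
      have := Subtype.ext_iff.mp (LinearMap.mem_ker.mp hX0)
      exact sub_eq_zero.mp this
    have hXU := (hmemU X.1).mp X.2
    have key : ∀ N : ℕ, ∀ i k : Fin n, (k : ℕ) + (n - (i : ℕ)) ≤ N → X.1 i k = 0 := by
      intro N
      induction N with
      | zero =>
        intro i k h
        exact absurd h (by have := i.2; omega)
      | succ N IH =>
        intro i k hik
        by_cases hb : blk (k : ℕ) ≤ blk (i : ℕ)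
        · exact hXU i k hb
        push_neg at hb
        have hAXik : (A * X.1) i k = A i i * X.1 i k := by
          rw [Matrix.mul_apply]
          refine Finset.sum_eq_single_of_mem i (Finset.mem_univ i) ?_
          intro t _ ht
          by_cases h2 : (t : ℕ) = (i : ℕ) + 1
          · rw [IH t k (by have := i.2; omega), mul_zero]
          · rw [hAne i t (fun hh => ht (Fin.ext hh)) h2, zero_mul]
        have hXA'ik : (X.1 * A') i k = X.1 i k * A' k k := by
          rw [Matrix.mul_apply]
          refine Finset.sum_eq_single_of_mem k (Finset.mem_univ k) ?_
          intro t _ ht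
          by_cases h2 : (k : ℕ) = (t : ℕ) + 1
          · rw [IH i t (by omega), zero_mul]
          · rw [hA'ne t k (fun hh => ht (Fin.ext hh.symm)) h2, mul_zero]
        have heq : A i i * X.1 i k = X.1 i k * A' k k := by
          rw [← hAXik, ← hXA'ik, hcomm]
        rw [hAdiag i, hA'diag k] at heq
        have hne : lam ⟨blk (i : ℕ), hblk_lt_s _ i.2⟩ ≠ lam ⟨blk (k : ℕ), hblk_lt_s _ k.2⟩ := by
          intro h
          have := congrArg Fin.val (hlaminj h)
          simp only [] at this
          omega
        have h3 : (lam ⟨blk (i : ℕ), hblk_lt_s _ i.2⟩ - lam ⟨blk (k : ℕ), hblk_lt_s _ k.2⟩)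
            * X.1 i k = 0 := by linear_combination heq
        rcases mul_eq_zero.mp h3 with h | h
        · exact absurd h (sub_ne_zero_of_ne hne)
        · exact h
    have : X.1 = 0 := by
      ext i k
      exact key ((k : ℕ) + (n - (i : ℕ))) i k le_rfl
    simp [Submodule.mem_bot, Subtype.ext_iff, this]
  -- E = A' - A lies in U
  have hEU : A' - A ∈ U := by
    rw [hmemU]
    intro i k hik
    rw [Matrix.sub_apply, hA' i k]
    by_cases hbd : ∃ t, 1 ≤ t ∧ t ≤ s - 1 ∧ (i : ℕ) + 1 = nsum m t ∧ (k : ℕ) = nsum m t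
    · exfalso
      obtain ⟨t, ht1, hts, hi1, hk1⟩ := hbd
      have h1 : blk (i : ℕ) < t := hblk_lt _ t (by omega)
      have h2 : t ≤ blk (k : ℕ) := hblk_ge _ t (by omega) (by omega)
      omega
    · rw [if_neg hbd, sub_self]
  -- solve the Sylvester equation
  obtain ⟨X, hXeq⟩ := LinearMap.injective_iff_surjective.mp hinj ⟨A' - A, hEU⟩
  have hXeq' : A * X.1 - X.1 * A' = A' - A := Subtype.ext_iff.mp hXeq
  have hXU := (hmemU X.1).mp X.2
  -- the similarity matrix
  refine ⟨1 + X.1, ?_, ?_⟩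
  · have hdet : (1 + X.1).det = 1 := by
      have hut : (1 + X.1).BlockTriangular id := by
        intro i k hik
        simp only [id] at hik
        rw [Matrix.add_apply, Matrix.one_apply_ne (by exact fun h => absurd (congrArg Fin.val h) (by omega)),
          hXU i k (hblk_mono _ _ (le_of_lt hik)), add_zero]
      rw [Matrix.det_of_upperTriangular hut]
      refine Finset.prod_eq_one fun i _ => ?_
      rw [Matrix.add_apply, Matrix.one_apply_eq, hXU i i le_rfl, add_zero]
    rw [hdet]
    exact isUnit_one
  · have hdet : (1 + X.1).det = 1 := by
      have hut : (1 + X.1).BlockTriangular id := by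
        intro i k hik
        simp only [id] at hik
        rw [Matrix.add_apply, Matrix.one_apply_ne (by exact fun h => absurd (congrArg Fin.val h) (by omega)),
          hXU i k (hblk_mono _ _ (le_of_lt hik)), add_zero]
      rw [Matrix.det_of_upperTriangular hut]
      refine Finset.prod_eq_one fun i _ => ?_
      rw [Matrix.add_apply, Matrix.one_apply_eq, hXU i i le_rfl, add_zero]
    have hPA : (1 + X.1) * A' = A * (1 + X.1) := by
      have h3 : A * X.1 = A' - A + X.1 * A' := by rw [← hXeq']; abel
      rw [add_mul, one_mul, mul_add, mul_one, h3]
      abel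
    have hPinv : (1 + X.1)⁻¹ * (1 + X.1) = 1 :=
      Matrix.nonsing_inv_mul _ (by rw [hdet]; exact isUnit_one)
    calc A' = 1 * A' := (one_mul _).symm
      _ = (1 + X.1)⁻¹ * (1 + X.1) * A' := by rw [hPinv]
      _ = (1 + X.1)⁻¹ * ((1 + X.1) * A') := by rw [mul_assoc]
      _ = (1 + X.1)⁻¹ * (A * (1 + X.1)) := by rw [hPA]
      _ = (1 + X.1)⁻¹ * A * (1 + X.1) := by rw [mul_assoc]
end

section
/- Let A = diag(B_1,…,B_s) be a block Jordan matrix in Ω_n whose first block B_1 has size m_1 and eigenvalue λ_1. Let φ : D → G_n be holomorphic and satisfy the conditions (★) at 0 relative to A. Let φ_{1,1},…,φ_{m_1,m_1} : D → ℂ be holomorphic functions with φ_{i,i}(0) = λ_1 for 1 ≤ i ≤ m_1. Then for every 0 ≤ k ≤ m_1 − 1, the function ζ ↦ Δ^k P_{[φ(ζ)]}(φ_{1,1}(ζ),…,φ_{k+1,k+1}(ζ)) satisfies Δ^k P_{[φ(ζ)]}(φ_{1,1}(ζ),…,φ_{k+1,k+1}(ζ)) = O(ζ^{d_{m_1−k}(B_1)})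 at 0. -/
open Polynomial

section Aux

open Finset Polynomial

open Filter Topology

def Van (f : ℂ → ℂ) (d : ℕ) : Prop :=
  ∃ g : ℂ → ℂ, AnalyticAt ℂ g 0 ∧ ∀ᶠ z in 𝓝 (0:ℂ), f z = z ^ d * g z

lemma analyticAt_deriv' {g : ℂ → ℂ} (hg : AnalyticAt ℂ g 0) :
    AnalyticAt ℂ (deriv g) 0 := by
  have : AnalyticOnNhd ℂ g {(0:ℂ)} := fun x hx => by
    rcases hx with rfl; exact hg
  exact this.deriv 0 rfl

lemma van_deriv_step {g : ℂ → ℂ} (hg : AnalyticAt ℂ g 0) (d : ℕ) (f : ℂ → ℂ)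
    (hf : ∀ᶠ z in 𝓝 (0:ℂ), f z = z ^ (d+1) * g z) :
    ∃ g₁ : ℂ → ℂ, AnalyticAt ℂ g₁ 0 ∧ (∀ᶠ z in 𝓝 (0:ℂ), deriv f z = z ^ d * g₁ z) ∧
      g₁ 0 = ((d:ℂ)+1) * g 0 := by
  refine ⟨fun z => ((d:ℂ)+1) * g z + z * deriv g z,
    (analyticAt_const.mul hg).add (analyticAt_id.mul (analyticAt_deriv' hg)), ?_, by simp⟩
  have hd : deriv f =ᶠ[𝓝 (0:ℂ)] deriv (fun z => z ^ (d+1) * g z) :=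
    Filter.EventuallyEq.deriv hf
  filter_upwards [hd, hg.eventually_analyticAt] with z h1 h2
  rw [h1]
  have hder : HasDerivAt (fun z : ℂ => z ^ (d+1) * g z)
      ((((d:ℂ)+1) * z ^ d) * g z + z ^ (d+1) * deriv g z) z := by
    have hp : HasDerivAt (fun z : ℂ => z ^ (d+1)) ((((d:ℕ)+1 : ℕ) : ℂ) * z ^ d) z := by
      simpa using hasDerivAt_pow (d+1) z
    have := hp.mul h2.differentiableAt.hasDerivAt
    refine this.congr_deriv ?_
    push_cast; ring
  rw [hder.deriv]; ring

lemma van_iteratedDeriv : ∀ (d : ℕ) {g f : ℂ → ℂ}, AnalyticAt ℂ g 0 →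
    (∀ᶠ z in 𝓝 (0:ℂ), f z = z ^ d * g z) →
    (∀ i < d, iteratedDeriv i f 0 = 0) ∧ iteratedDeriv d f 0 = (Nat.factorial d : ℂ) * g 0 := by
  intro d
  induction d with
  | zero =>
    intro g f hg hf
    refine ⟨fun i hi => absurd hi (Nat.not_lt_zero i), ?_⟩
    have h0 : f 0 = g 0 := by simpa using hf.self_of_nhds
    simpa [iteratedDeriv_zero] using h0
  | succ d ih =>
    intro g f hg hf
    obtain ⟨g₁, hg₁, hdf, hg₁0⟩ := van_deriv_step hg d f hf
    obtain ⟨ih1, ih2⟩ := ih hg₁ hdf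
    have hf0 : f 0 = 0 := by simpa using hf.self_of_nhds
    constructor
    · intro i hi
      match i with
      | 0 => simpa [iteratedDeriv_zero] using hf0
      | (i+1) =>
        rw [iteratedDeriv_succ']
        exact ih1 i (by omega)
    · rw [iteratedDeriv_succ', ih2, hg₁0]
      push_cast [Nat.factorial_succ]
      ring

lemma van_vanishes {f : ℂ → ℂ} {d : ℕ} (h : Van f d) :
    ∀ i < d, iteratedDeriv i f 0 = 0 := by
  obtain ⟨g, hg, hf⟩ := h
  exact (van_iteratedDeriv d hg hf).1

lemma van_of_vanishes {f : ℂ → ℂ} {d : ℕ} (hf : AnalyticAt ℂ f 0)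
    (hv : ∀ i < d, iteratedDeriv i f 0 = 0) : Van f d := by
  by_cases h : ∀ᶠ z in 𝓝 (0:ℂ), f z = 0
  · exact ⟨0, analyticAt_const, by filter_upwards [h] with z hz; simp [hz]⟩
  · obtain ⟨N, g, hg, hg0, heq⟩ := (hf.exists_eventuallyEq_pow_smul_nonzero_iff).mpr h
    have heq' : ∀ᶠ z in 𝓝 (0:ℂ), f z = z ^ N * g z := by
      filter_upwards [heq] with z hz; simpa [smul_eq_mul] using hz
    have hN : iteratedDeriv N f 0 ≠ 0 := by
      rw [(van_iteratedDeriv N hg heq').2]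
      exact mul_ne_zero (Nat.cast_ne_zero.mpr (Nat.factorial_ne_zero N)) hg0
    have hdN : d ≤ N := by
      by_contra hlt
      exact hN (hv N (by omega))
    refine ⟨fun z => z ^ (N - d) * g z, (analyticAt_id.pow _).mul hg, ?_⟩
    filter_upwards [heq'] with z hz
    rw [hz, ← mul_assoc, ← pow_add]
    congr 2
    omega

lemma van_mul {f g : ℂ → ℂ} {a b : ℕ} (hf : Van f a) (hg : Van g b) :
    Van (fun z => f z * g z) (a + b) := by
  obtain ⟨F, hF, hfe⟩ := hf
  obtain ⟨G, hG, hge⟩ := hg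
  refine ⟨fun z => F z * G z, hF.mul hG, ?_⟩
  filter_upwards [hfe, hge] with z h1 h2
  rw [h1, h2, pow_add]; ring

lemma van_add {f g : ℂ → ℂ} {d : ℕ} (hf : Van f d) (hg : Van g d) :
    Van (fun z => f z + g z) d := by
  obtain ⟨F, hF, hfe⟩ := hf
  obtain ⟨G, hG, hge⟩ := hg
  refine ⟨fun z => F z + G z, hF.add hG, ?_⟩
  filter_upwards [hfe, hge] with z h1 h2
  rw [h1, h2]; ring

lemma van_mono {f : ℂ → ℂ} {d e : ℕ} (hf : Van f d) (he : e ≤ d) : Van f e := by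
  obtain ⟨F, hF, hfe⟩ := hf
  refine ⟨fun z => z ^ (d - e) * F z, (analyticAt_id.pow _).mul hF, ?_⟩
  filter_upwards [hfe] with z h1
  rw [h1, ← mul_assoc, ← pow_add]
  congr 2
  omega

lemma van_zero {f : ℂ → ℂ} (hf : AnalyticAt ℂ f 0) : Van f 0 :=
  ⟨f, hf, by filter_upwards with z; simp⟩

lemma van_const (c : ℂ) : Van (fun _ => c) 0 := van_zero analyticAt_const

lemma van_const_mul {g : ℂ → ℂ} {d : ℕ} (c : ℂ) (hg : Van g d) :
    Van (fun z => c * g z) d := by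
  simpa using van_mul (van_const c) hg

lemma van_one {f : ℂ → ℂ} (hf : AnalyticAt ℂ f 0) (h0 : f 0 = 0) : Van f 1 := by
  obtain ⟨p, hp⟩ := hf
  refine ⟨dslope f 0, ⟨p.fslope, hp.has_fpower_series_dslope_fslope⟩, ?_⟩
  filter_upwards with z
  have := sub_smul_dslope f 0 z
  simp only [sub_zero, smul_eq_mul, h0] at this
  rw [pow_one, this]

lemma van_pow {f : ℂ → ℂ} (hf : Van f 1) (c : ℕ) : Van (fun z => f z ^ c) c := by
  induction c with
  | zero => simpa using van_const 1
  | succ c ih =>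
    have := van_mul ih hf
    simpa [pow_succ] using this

lemma van_sum {ι : Type*} (S : Finset ι) (f : ι → ℂ → ℂ) (d : ℕ)
    (h : ∀ i ∈ S, Van (f i) d) : Van (fun z => ∑ i ∈ S, f i z) d := by
  induction S using Finset.cons_induction with
  | empty => exact ⟨fun _ => 0, analyticAt_const, by filter_upwards with z; simp⟩
  | cons a S ha ih =>
    simp only [Finset.sum_cons]
    exact van_add (h a (Finset.mem_cons_self a S))
      (ih fun i hi => h i (Finset.mem_cons_of_mem hi))

lemma van_prod {ι : Type*} (S : Finset ι) (f : ι → ℂ → ℂ) (e : ι → ℕ)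
    (h : ∀ i ∈ S, Van (f i) (e i)) :
    Van (fun z => ∏ i ∈ S, f i z) (∑ i ∈ S, e i) := by
  induction S using Finset.cons_induction with
  | empty => simpa using van_const 1
  | cons a S ha ih =>
    simp only [Finset.prod_cons, Finset.sum_cons]
    exact van_mul (h a (Finset.mem_cons_self a S))
      (ih fun i hi => h i (Finset.mem_cons_of_mem hi))

lemma hockey (b s : ℕ) : ∑ j ∈ range (s+1), (b + j).choose j = (b + s + 1).choose s := by
  induction s with
  | zero => simp
  | succ s ih =>
    rw [Finset.sum_range_succ, ih]
    have h1 : b + (s+1) + 1 = (b + s + 1) + 1 := by omega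
    have h2 : b + (s+1) = (b + s) + 1 := by omega
    rw [h1, h2, Nat.choose_succ_succ (b+s+1) s]

lemma Wsum (a : ℕ) : ∀ b s : ℕ,
    ∑ i ∈ range (s+1), (a+i).choose i * (b + (s-i)).choose (s-i)
      = (a+b+1+s).choose s := by
  induction a with
  | zero =>
    intro b s
    have hrefl := Finset.sum_range_reflect (fun j => (b + j).choose j) (s+1)
    calc ∑ i ∈ range (s+1), (0+i).choose i * (b + (s-i)).choose (s-i)
        = ∑ i ∈ range (s+1), (b + (s-i)).choose (s-i) := by
          refine Finset.sum_congr rfl fun i hi => ?_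
          rw [Nat.zero_add, Nat.choose_self, one_mul]
      _ = ∑ i ∈ range (s+1), (b + i).choose i := by
          rw [← hrefl]
          refine Finset.sum_congr rfl fun i hi => ?_
          congr 1
      _ = (b + s + 1).choose s := hockey b s
      _ = (0+b+1+s).choose s := by congr 1; omega
  | succ a ih =>
    intro b s
    induction s with
    | zero => simp
    | succ s ihs =>
      have e1 : ∑ i ∈ range (s+1+1), (a+1+i).choose i * (b + (s+1-i)).choose (s+1-i)
          = (∑ i ∈ range (s+1), (a+1+(i+1)).choose (i+1) * (b + (s-i)).choose (s-i))
            + (b+(s+1)).choose (s+1) := by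
        rw [Finset.sum_range_succ' (fun i => (a+1+i).choose i * (b + (s+1-i)).choose (s+1-i)) (s+1)]
        congr 1
        · refine Finset.sum_congr rfl fun i hi => ?_
          congr 2 <;> omega
        · simp
      have e2 : ∀ i : ℕ, (a+1+(i+1)).choose (i+1) = (a+1+i).choose i + (a+i+1).choose (i+1) := by
        intro i
        have : a+1+(i+1) = (a+i+1)+1 := by omega
        rw [this, Nat.choose_succ_succ (a+i+1) i]
        congr 2
        omega
      have e3 : ∑ i ∈ range (s+1+1), (a+i).choose i * (b + (s+1-i)).choose (s+1-i)
          = (∑ i ∈ range (s+1), (a+i+1).choose (i+1) * (b + (s-i)).choose (s-i))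
            + (b+(s+1)).choose (s+1) := by
        rw [Finset.sum_range_succ' (fun i => (a+i).choose i * (b + (s+1-i)).choose (s+1-i)) (s+1)]
        congr 1
        · refine Finset.sum_congr rfl fun i hi => ?_
          congr 2 <;> omega
        · simp
      rw [e1]
      have split : ∑ i ∈ range (s+1), (a+1+(i+1)).choose (i+1) * (b + (s-i)).choose (s-i)
          = (∑ i ∈ range (s+1), (a+1+i).choose i * (b + (s-i)).choose (s-i))
            + ∑ i ∈ range (s+1), (a+i+1).choose (i+1) * (b + (s-i)).choose (s-i) := by
        rw [← Finset.sum_add_distrib]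
        refine Finset.sum_congr rfl fun i hi => ?_
        rw [e2 i, Nat.add_mul]
      rw [split]
      have hihs := ihs
      have hih2 := ih b (s+1)
      rw [e3] at hih2
      -- from hih2 : ∑ (a+i+1).choose (i+1) * ... + (b+(s+1)).choose (s+1) = (a+b+1+(s+1)).choose (s+1)
      have pasc : (a+1+b+1+(s+1)).choose (s+1)
          = (a+1+b+1+s).choose s + (a+b+1+(s+1)).choose (s+1) := by
        have h : a+1+b+1+(s+1) = (a+b+1+(s+1))+1 := by omega
        rw [h, Nat.choose_succ_succ (a+b+1+(s+1)) s]
        congr 2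
        omega
      omega

lemma sum_adT_succ {M : Type*} [AddCommMonoid M] (K s : ℕ) (F : (Fin (K+2) → ℕ) → M) :
    ∑ x ∈ Finset.Nat.antidiagonalTuple (K+2) s, F x
      = ∑ p ∈ Finset.HasAntidiagonal.antidiagonal s, ∑ e ∈ Finset.Nat.antidiagonalTuple (K+1) p.2,
          F (Fin.cons p.1 e) := by
  rw [Finset.sum_sigma']
  refine Finset.sum_nbij' (i := fun x => ⟨(x 0, ∑ i, x (Fin.succ i)), Fin.tail x⟩)
    (j := fun q => Fin.cons q.1.1 q.2) ?_ ?_ ?_ ?_ ?_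
  · intro x hx
    rw [Finset.Nat.mem_antidiagonalTuple] at hx
    refine Finset.mem_sigma.mpr ⟨?_, ?_⟩
    · rw [Finset.HasAntidiagonal.mem_antidiagonal]
      simp only
      rw [← hx]
      exact (Fin.sum_univ_succ x).symm
    · rw [Finset.Nat.mem_antidiagonalTuple]
      rfl
  · intro q hq
    rw [Finset.mem_sigma, Finset.HasAntidiagonal.mem_antidiagonal, Finset.Nat.mem_antidiagonalTuple] at hq
    rw [Finset.Nat.mem_antidiagonalTuple, Fin.sum_univ_succ]
    simp only [Fin.cons_zero, Fin.cons_succ]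
    rw [hq.2, hq.1]
  · intro x _
    exact Fin.cons_self_tail x
  · intro q hq
    rw [Finset.mem_sigma, Finset.HasAntidiagonal.mem_antidiagonal, Finset.Nat.mem_antidiagonalTuple] at hq
    rcases q with ⟨⟨p1, p2⟩, e⟩
    simp only [Fin.cons_zero, Fin.tail_cons]
    congr 1
    simp only at hq
    rw [show (∑ i, (Fin.cons p1 e : Fin (K+2) → ℕ) (Fin.succ i)) = p2 from by
      simpa [Fin.cons_succ] using hq.2]
  · intro x _
    rw [Fin.cons_self_tail]

lemma Vsum : ∀ (K : ℕ) (b : Fin (K+1) → ℕ) (s : ℕ),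
    ∑ e ∈ Finset.Nat.antidiagonalTuple (K+1) s, ∏ i, (b i + e i).choose (e i)
      = (∑ i, b i + K + s).choose s := by
  intro K
  induction K with
  | zero =>
    intro b s
    rw [Finset.Nat.antidiagonalTuple_one]
    simp [Fin.sum_univ_one]
  | succ K ih =>
    intro b s
    rw [sum_adT_succ K s (fun e => ∏ i, (b i + e i).choose (e i))]
    have e1 : ∀ p ∈ Finset.HasAntidiagonal.antidiagonal s,
        ∑ e ∈ Finset.Nat.antidiagonalTuple (K+1) p.2,
          ∏ i, (b i + (Fin.cons p.1 e : Fin (K+2) → ℕ) i).choose ((Fin.cons p.1 e : Fin (K+2) → ℕ) i)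
        = (b 0 + p.1).choose p.1 * ((∑ i, b (Fin.succ i)) + K + p.2).choose p.2 := by
      intro p hp
      rw [← ih (fun i => b (Fin.succ i)) p.2, Finset.mul_sum]
      refine Finset.sum_congr rfl fun e he => ?_
      rw [Fin.prod_univ_succ]
      simp only [Fin.cons_zero, Fin.cons_succ]
    rw [Finset.sum_congr rfl e1, Finset.Nat.sum_antidiagonal_eq_sum_range_succ_mk]
    have hW := Wsum (b 0) ((∑ i, b (Fin.succ i)) + K) s
    rw [show (∑ i : Fin (K+1+1), b i) + (K+1) + s
        = b 0 + ((∑ i, b (Fin.succ i)) + K) + 1 + s from by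
      rw [Fin.sum_univ_succ]; omega]
    exact hW


lemma choose_symm_add' (b e : ℕ) : (b + e).choose b = (b + e).choose e := by
  rw [← Nat.choose_symm (Nat.le_add_right b e)]
  congr 1
  omega

lemma Hsum (K dd : ℕ) (lam : ℂ) (y : Fin (K+1) → ℂ) :
    homogSum (K+1) dd (fun i => y i + lam) =
      ∑ r ∈ range (dd+1), homogSum (K+1) r y * ((K+dd).choose (K+r) : ℂ) * lam ^ (dd - r) := by
  classical
  unfold homogSum
  have lhs_eq : ∑ c ∈ Finset.Nat.antidiagonalTuple (K+1) dd, ∏ i, (y i + lam) ^ c i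
      = ∑ c ∈ Finset.Nat.antidiagonalTuple (K+1) dd,
          ∑ b ∈ Fintype.piFinset (fun i => range (c i + 1)),
            ∏ i, (y i ^ b i * lam ^ (c i - b i) * ((c i).choose (b i) : ℂ)) := by
    refine Finset.sum_congr rfl fun c _ => ?_
    rw [show (∏ i, (y i + lam) ^ c i)
        = ∏ i, ∑ b ∈ range (c i + 1), (y i ^ b * lam ^ (c i - b) * ((c i).choose b : ℂ)) from
      Finset.prod_congr rfl fun i _ => add_pow (y i) lam (c i)]
    rw [Finset.prod_univ_sum]
  rw [lhs_eq]
  have rhs_eq : ∀ r ∈ range (dd+1),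
      (∑ b ∈ Finset.Nat.antidiagonalTuple (K+1) r, ∏ i, y i ^ b i)
          * ((K+dd).choose (K+r) : ℂ) * lam ^ (dd - r)
      = ∑ b ∈ Finset.Nat.antidiagonalTuple (K+1) r,
          ∑ e ∈ Finset.Nat.antidiagonalTuple (K+1) (dd - r),
            ∏ i, (y i ^ b i * lam ^ e i * ((b i + e i).choose (b i) : ℂ)) := by
    intro r hr
    rw [Finset.mem_range] at hr
    rw [Finset.sum_mul, Finset.sum_mul]
    refine Finset.sum_congr rfl fun b hb => ?_
    rw [Finset.Nat.mem_antidiagonalTuple] at hb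
    have inner : ∀ e ∈ Finset.Nat.antidiagonalTuple (K+1) (dd - r),
        ∏ i, (y i ^ b i * lam ^ e i * ((b i + e i).choose (b i) : ℂ))
        = (∏ i, y i ^ b i) * lam ^ (dd - r) * ((∏ i, (b i + e i).choose (e i) : ℕ) : ℂ) := by
      intro e he
      rw [Finset.Nat.mem_antidiagonalTuple] at he
      rw [Finset.prod_mul_distrib, Finset.prod_mul_distrib]
      rw [Finset.prod_pow_eq_pow_sum, he]
      push_cast
      congr 1
      refine Finset.prod_congr rfl fun i _ => ?_
      rw [choose_symm_add']
    rw [Finset.sum_congr rfl inner]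
    have hV : ∑ e ∈ Finset.Nat.antidiagonalTuple (K+1) (dd - r),
        ∏ i, (b i + e i).choose (e i) = (K+dd).choose (K+r) := by
      rw [Vsum K b (dd - r), hb]
      rw [show r + K + (dd - r) = K + dd from by omega]
      rw [← Nat.choose_symm (show K + r ≤ K + dd from by omega)]
      congr 1
      omega
    rw [show ∑ e ∈ Finset.Nat.antidiagonalTuple (K+1) (dd - r),
        (∏ i, y i ^ b i) * lam ^ (dd - r) * ((∏ i, (b i + e i).choose (e i) : ℕ) : ℂ)
        = (∏ i, y i ^ b i) * lam ^ (dd - r) *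
          ((∑ e ∈ Finset.Nat.antidiagonalTuple (K+1) (dd - r),
            ∏ i, (b i + e i).choose (e i) : ℕ) : ℂ) from by
      rw [Nat.cast_sum, Finset.mul_sum]]
    rw [hV]
    ring
  rw [show ∑ r ∈ range (dd+1),
        (∑ b ∈ Finset.Nat.antidiagonalTuple (K+1) r, ∏ i, y i ^ b i)
          * ((K+dd).choose (K+r) : ℂ) * lam ^ (dd - r)
      = ∑ r ∈ range (dd+1), ∑ b ∈ Finset.Nat.antidiagonalTuple (K+1) r,
          ∑ e ∈ Finset.Nat.antidiagonalTuple (K+1) (dd - r),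
            ∏ i, (y i ^ b i * lam ^ e i * ((b i + e i).choose (b i) : ℂ))
      from Finset.sum_congr rfl rhs_eq]
  -- flatten both sides to sums over sigma types and compare via an explicit bijection
  have rflat : ∑ r ∈ range (dd+1), ∑ b ∈ Finset.Nat.antidiagonalTuple (K+1) r,
          ∑ e ∈ Finset.Nat.antidiagonalTuple (K+1) (dd - r),
            ∏ i, (y i ^ b i * lam ^ e i * ((b i + e i).choose (b i) : ℂ))
      = ∑ q ∈ (range (dd+1)).sigma
            (fun r => Finset.Nat.antidiagonalTuple (K+1) r ×ˢ
              Finset.Nat.antidiagonalTuple (K+1) (dd - r)),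
          ∏ i, (y i ^ q.2.1 i * lam ^ q.2.2 i * ((q.2.1 i + q.2.2 i).choose (q.2.1 i) : ℂ)) := by
    rw [Finset.sum_sigma]
    refine Finset.sum_congr rfl fun r _ => ?_
    rw [Finset.sum_product]
  rw [rflat, Finset.sum_sigma']
  refine Finset.sum_nbij'
    (i := fun q : Σ _ : Fin (K+1) → ℕ, (Fin (K+1) → ℕ) =>
      (⟨∑ t, q.2 t, (q.2, fun t => q.1 t - q.2 t)⟩ :
        Σ _ : ℕ, (Fin (K+1) → ℕ) × (Fin (K+1) → ℕ)))
    (j := fun q : Σ _ : ℕ, (Fin (K+1) → ℕ) × (Fin (K+1) → ℕ) =>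
      (⟨fun t => q.2.1 t + q.2.2 t, q.2.1⟩ : Σ _ : Fin (K+1) → ℕ, (Fin (K+1) → ℕ)))
    ?_ ?_ ?_ ?_ ?_
  · rintro ⟨c, b⟩ hq
    simp only [Finset.mem_sigma, Finset.Nat.mem_antidiagonalTuple, Fintype.mem_piFinset,
      Finset.mem_range, Finset.mem_product] at hq ⊢
    obtain ⟨hc, hb⟩ := hq
    have hble : ∀ t, b t ≤ c t := fun t => Nat.lt_succ_iff.mp (hb t)
    have hsb : ∑ t, b t ≤ dd := hc ▸ Finset.sum_le_sum fun t _ => hble t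
    refine ⟨by omega, trivial, ?_⟩
    have : ∑ t, (c t - b t) + ∑ t, b t = ∑ t, c t := by
      rw [← Finset.sum_add_distrib]
      exact Finset.sum_congr rfl fun t _ => by have := hble t; omega
    omega
  · rintro ⟨r, b, e⟩ hq
    simp only [Finset.mem_sigma, Finset.mem_product, Finset.mem_range,
      Finset.Nat.mem_antidiagonalTuple, Fintype.mem_piFinset] at hq ⊢
    obtain ⟨hr, hbr, her⟩ := hq
    constructor
    · rw [Finset.sum_add_distrib, hbr, her]
      omega
    · intro t
      omega
  · rintro ⟨c, b⟩ hq
    simp only [Finset.mem_sigma, Finset.Nat.mem_antidiagonalTuple, Fintype.mem_piFinset,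
      Finset.mem_range] at hq
    obtain ⟨hc, hb⟩ := hq
    have hble : ∀ t, b t ≤ c t := fun t => Nat.lt_succ_iff.mp (hb t)
    show (⟨fun t => b t + (c t - b t), b⟩ : Σ _ : Fin (K+1) → ℕ, (Fin (K+1) → ℕ)) = ⟨c, b⟩
    rw [show (fun t => b t + (c t - b t)) = c from funext fun t => by have := hble t; omega]
  · rintro ⟨r, b, e⟩ hq
    simp only [Finset.mem_sigma, Finset.mem_product, Finset.mem_range,
      Finset.Nat.mem_antidiagonalTuple] at hq
    obtain ⟨hr, hbr, her⟩ := hq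
    show (⟨∑ t, b t, (b, fun t => (b t + e t) - b t)⟩ :
        Σ _ : ℕ, (Fin (K+1) → ℕ) × (Fin (K+1) → ℕ)) = ⟨r, (b, e)⟩
    rw [hbr, show (fun t => (b t + e t) - b t) = e from funext fun t => by omega]
  · rintro ⟨c, b⟩ hq
    simp only [Finset.mem_sigma, Finset.Nat.mem_antidiagonalTuple, Fintype.mem_piFinset,
      Finset.mem_range] at hq
    obtain ⟨hc, hb⟩ := hq
    have hble : ∀ t, b t ≤ c t := fun t => Nat.lt_succ_iff.mp (hb t)
    simp only
    refine Finset.prod_congr rfl fun t _ => ?_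
    rw [show b t + (c t - b t) = c t from by have := hble t; omega]

lemma polyDeriv_eq (k : ℕ) (P : Polynomial ℂ) :
    polyDeriv k P = (⇑(derivative (R := ℂ)))^[k] P := rfl

lemma natDegree_Pv_le (n : ℕ) (v : Fin n → ℂ) : (Pv n v).natDegree ≤ n := by
  unfold Pv
  refine (natDegree_add_le _ _).trans (max_le ?_ ?_)
  · simp [natDegree_X_pow]
  · refine natDegree_sum_le_of_forall_le _ _ fun i _ => ?_
    refine (natDegree_C_mul_le _ _).trans ?_
    simp [natDegree_X_pow]

lemma divDiff_eq_Icc (n : ℕ) (P : Polynomial ℂ) (hP : P.natDegree ≤ n) (k : ℕ)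
    (x : Fin (k+1) → ℂ) :
    divDiff P k x = ∑ j ∈ Finset.Icc k n, P.coeff j * homogSum (k + 1) (j - k) x := by
  unfold divDiff
  refine Finset.sum_subset (Finset.Icc_subset_Icc_right hP) fun j hj hj' => ?_
  rw [Finset.mem_Icc] at hj
  rw [Finset.mem_Icc] at hj'
  rw [coeff_eq_zero_of_natDegree_lt (by omega), zero_mul]

lemma divDiff_expand (n k : ℕ) (P : Polynomial ℂ) (hP : P.natDegree ≤ n) (lam : ℂ)
    (x : Fin (k+1) → ℂ) :
    divDiff P k x = ∑ r ∈ range (n-k+1),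
      homogSum (k+1) r (fun i => x i - lam) *
        (∑ j ∈ Finset.Icc k n, P.coeff j * ((j.choose (k+r)) : ℂ) * lam ^ (j - (k+r))) := by
  rw [divDiff_eq_Icc n P hP k x]
  have perj : ∀ j ∈ Finset.Icc k n,
      P.coeff j * homogSum (k + 1) (j - k) x
      = ∑ r ∈ range (n-k+1),
          homogSum (k+1) r (fun i => x i - lam) * ((j.choose (k+r)) : ℂ) * lam ^ (j - (k+r))
            * P.coeff j := by
    intro j hj
    rw [Finset.mem_Icc] at hj
    have hx : x = fun i => (x i - lam) + lam := funext fun i => by ring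
    rw [show homogSum (k + 1) (j - k) x
        = homogSum (k + 1) (j - k) (fun i => (x i - lam) + lam) from by rw [← hx]]
    rw [Hsum k (j - k) lam (fun i => x i - lam)]
    have hext : ∑ r ∈ range (j-k+1),
        homogSum (k+1) r (fun i => x i - lam) * ((k+(j-k)).choose (k+r) : ℂ) * lam ^ ((j-k) - r)
        = ∑ r ∈ range (n-k+1),
          homogSum (k+1) r (fun i => x i - lam) * ((j.choose (k+r)) : ℂ) * lam ^ (j - (k+r)) := by
      rw [show k + (j - k) = j from by omega]
      have hsub : range (j-k+1) ⊆ range (n-k+1) := by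
        intro t ht; rw [Finset.mem_range] at ht ⊢; omega
      rw [Finset.sum_subset hsub (fun r hr hr' => by
        rw [Finset.mem_range] at hr hr'
        rw [Nat.choose_eq_zero_of_lt (by omega)]
        simp)]
      refine Finset.sum_congr rfl fun r hr => ?_
      rw [show j - k - r = j - (k + r) from by omega]
    rw [hext, Finset.mul_sum]
    refine Finset.sum_congr rfl fun r _ => ?_
    ring
  rw [Finset.sum_congr rfl perj, Finset.sum_comm]
  refine Finset.sum_congr rfl fun r _ => ?_
  rw [Finset.mul_sum]
  refine Finset.sum_congr rfl fun j _ => ?_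
  ring

lemma E_deriv (n k K : ℕ) (hkK : k ≤ K) (P : Polynomial ℂ) (hP : P.natDegree ≤ n) (lam : ℂ) :
    ((K.factorial : ℂ)) * (∑ j ∈ Finset.Icc k n, P.coeff j * (j.choose K : ℂ) * lam ^ (j - K))
      = (polyDeriv K P).eval lam := by
  rw [polyDeriv_eq]
  by_cases hK : K ≤ n
  · have hdeg : ((⇑(derivative (R := ℂ)))^[K] P).natDegree < n + 1 :=
      lt_of_le_of_lt ((natDegree_iterate_derivative P K).trans (Nat.sub_le _ _)) (by omega)
    rw [eval_eq_sum_range' hdeg]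
    have rhs1 : ∑ t ∈ range (n+1), ((⇑(derivative (R := ℂ)))^[K] P).coeff t * lam ^ t
        = ∑ t ∈ range (n+1), (K.factorial : ℂ) * (((t+K).choose K : ℂ) * P.coeff (t+K) * lam ^ t) := by
      refine Finset.sum_congr rfl fun t _ => ?_
      rw [Polynomial.coeff_iterate_derivative, Nat.descFactorial_eq_factorial_mul_choose]
      push_cast [nsmul_eq_mul]
      ring
    rw [rhs1, ← Finset.mul_sum]
    congr 1
    have hres : ∑ t ∈ range (n+1), (((t+K).choose K : ℂ) * P.coeff (t+K) * lam ^ t)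
        = ∑ t ∈ range (n-K+1), (((t+K).choose K : ℂ) * P.coeff (t+K) * lam ^ t) := by
      refine (Finset.sum_subset ?_ ?_).symm
      · intro t ht; rw [Finset.mem_range] at ht ⊢; omega
      · intro t ht ht'
        rw [Finset.mem_range] at ht ht'
        rw [coeff_eq_zero_of_natDegree_lt (by omega)]
        ring
    rw [hres]
    have hres2 : ∑ j ∈ Finset.Icc k n, P.coeff j * (j.choose K : ℂ) * lam ^ (j - K)
        = ∑ j ∈ Finset.Icc K n, P.coeff j * (j.choose K : ℂ) * lam ^ (j - K) := by
      refine (Finset.sum_subset ?_ ?_).symm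
      · intro j hj; rw [Finset.mem_Icc] at hj ⊢; omega
      · intro j hj hj'
        rw [Finset.mem_Icc] at hj
        rw [Finset.mem_Icc] at hj'
        rw [Nat.choose_eq_zero_of_lt (by omega)]
        simp
    rw [hres2]
    refine Finset.sum_nbij' (i := fun j => j - K) (j := fun t => t + K) ?_ ?_ ?_ ?_ ?_
    · intro j hj; rw [Finset.mem_Icc] at hj
      show j - K ∈ range (n - K + 1)
      rw [Finset.mem_range]; omega
    · intro t ht; rw [Finset.mem_range] at ht
      show t + K ∈ Finset.Icc K n
      rw [Finset.mem_Icc]; omega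
    · intro j hj; rw [Finset.mem_Icc] at hj
      show j - K + K = j
      omega
    · intro t ht
      show t + K - K = t
      omega
    · intro j hj
      rw [Finset.mem_Icc] at hj
      show P.coeff j * (j.choose K : ℂ) * lam ^ (j - K)
          = ((j - K + K).choose K : ℂ) * P.coeff (j - K + K) * lam ^ (j - K)
      rw [show j - K + K = j from by omega]
      ring
  · rw [Polynomial.iterate_derivative_eq_zero (by omega), eval_zero]
    rw [show ∑ j ∈ Finset.Icc k n, P.coeff j * (j.choose K : ℂ) * lam ^ (j - K) = 0 from
      Finset.sum_eq_zero fun j hj => by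
        rw [Finset.mem_Icc] at hj
        rw [Nat.choose_eq_zero_of_lt (by omega)]
        simp]
    ring

lemma coeff_Pv (n : ℕ) (v : Fin n → ℂ) (j : ℕ) :
    (Pv n v).coeff j = (if j = n then (1:ℂ) else 0)
      + ∑ i : Fin n, ((-1:ℂ) ^ ((i:ℕ)+1) * v i) * (if j = n - ((i:ℕ)+1) then 1 else 0) := by
  unfold Pv
  rw [Polynomial.coeff_add, Polynomial.coeff_X_pow, Polynomial.finset_sum_coeff]
  congr 1
  refine Finset.sum_congr rfl fun i _ => ?_
  rw [Polynomial.coeff_C_mul, Polynomial.coeff_X_pow]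


lemma card_filter_Icc_anti {p : ℕ → Prop} [DecidablePred p] (mm : ℕ) {a b : ℕ} (hab : a ≤ b) :
    ((Finset.Icc b mm).filter p).card ≤ ((Finset.Icc a mm).filter p).card :=
  Finset.card_le_card (Finset.filter_subset_filter _ (Finset.Icc_subset_Icc_left hab))

lemma card_filter_Icc_step {p : ℕ → Prop} [DecidablePred p] (mm a : ℕ) :
    ((Finset.Icc a mm).filter p).card ≤ ((Finset.Icc (a+1) mm).filter p).card + 1 := by
  have hsub : (Finset.Icc a mm).filter p ⊆ insert a ((Finset.Icc (a+1) mm).filter p) := by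
    intro x hx
    rw [Finset.mem_filter, Finset.mem_Icc] at hx
    rcases eq_or_ne x a with rfl | hne
    · exact Finset.mem_insert_self _ _
    · refine Finset.mem_insert_of_mem ?_
      rw [Finset.mem_filter, Finset.mem_Icc]
      exact ⟨⟨by omega, hx.1.2⟩, hx.2⟩
  exact (Finset.card_le_card hsub).trans (Finset.card_insert_le _ _)

lemma dIdx_le {mm : ℕ} (B : Matrix (Fin mm) (Fin mm) ℂ) (i : ℕ) (hi : 1 ≤ i) :
    dIdx B i ≤ i := by
  unfold dIdx
  have hX := Finset.card_filter_le (Finset.Icc (mm - i + 2) mm)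
    (fun j => ∀ (h1 : j - 2 < mm) (h2 : j - 1 < mm), B ⟨j - 2, h1⟩ ⟨j - 1, h2⟩ = 0)
  rw [Nat.card_Icc] at hX
  omega

lemma dIdx_succ_le {mm : ℕ} (B : Matrix (Fin mm) (Fin mm) ℂ) (i : ℕ) :
    dIdx B (i+1) ≤ dIdx B i + 1 := by
  unfold dIdx
  have h1 := card_filter_Icc_step
    (p := fun j => ∀ (h1 : j - 2 < mm) (h2 : j - 1 < mm), B ⟨j - 2, h1⟩ ⟨j - 1, h2⟩ = 0)
    mm (mm - (i+1) + 2)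
  have h2 := card_filter_Icc_anti
    (p := fun j => ∀ (h1 : j - 2 < mm) (h2 : j - 1 < mm), B ⟨j - 2, h1⟩ ⟨j - 1, h2⟩ = 0)
    mm (show mm - i + 2 ≤ (mm - (i+1) + 2) + 1 from by omega)
  omega

lemma dIdx_sub_le {mm : ℕ} (B : Matrix (Fin mm) (Fin mm) ℂ) (i r : ℕ) :
    dIdx B i ≤ dIdx B (i - r) + r := by
  induction r with
  | zero => simp
  | succ r ih =>
    by_cases h : r < i
    · have h1 := dIdx_succ_le B (i - (r+1))
      rw [show i - (r+1) + 1 = i - r from by omega] at h1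
      omega
    · rw [show i - (r+1) = i - r from by omega]
      omega

end Aux

/-- Lemma 4.6(a): divided differences of `P_{[φ(ζ)]}` at holomorphic nodes
tending to `λ_1` inherit the vanishing orders `d_{m_1-k}(B_1)` from the conditions (★). -/
theorem statement8 (n s : ℕ) (hs : 0 < s) (m : Fin s → ℕ) (lam : Fin s → ℂ)
    (B : ∀ j : Fin s, Matrix (Fin (m j)) (Fin (m j)) ℂ)
    (A : Matrix (Fin n) (Fin n) ℂ) (hBJ : IsBlockJordan m lam B A)
    (hAΩ : A ∈ SpectralBall n)
    (φ : ℂ → Fin n → ℂ) (hφ : DifferentiableOn ℂ φ unitDisc)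
    (hφG : Set.MapsTo φ unitDisc (SymPolydisc n))
    (hstar : StarConditions m lam B φ 0)
    (φd : ℕ → ℂ → ℂ)
    (hφd : ∀ i, 1 ≤ i → i ≤ m ⟨0, hs⟩ →
      DifferentiableOn ℂ (φd i) unitDisc ∧ φd i 0 = lam ⟨0, hs⟩) :
    ∀ k < m ⟨0, hs⟩,
      VanishesToOrder
        (fun ζ => divDiff (Pv n (φ ζ)) k (fun t : Fin (k + 1) => φd ((t : ℕ) + 1) ζ)) 0
        (dIdx (B ⟨0, hs⟩) (m ⟨0, hs⟩ - k)) := by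
  intro k hk
  have hm1n : m ⟨0, hs⟩ ≤ n := by
    rw [← hBJ.1]
    exact Finset.single_le_sum (f := m) (fun j _ => Nat.zero_le _) (Finset.mem_univ _)
  have hnhds : unitDisc ∈ nhds (0:ℂ) :=
    Metric.isOpen_ball.mem_nhds (Metric.mem_ball_self one_pos)
  have hφa : ∀ i, AnalyticAt ℂ (fun ζ => φ ζ i) 0 := fun i =>
    ((differentiableOn_pi.mp hφ) i).analyticAt hnhds
  have hcoeffA : ∀ j, AnalyticAt ℂ (fun ζ => (Pv n (φ ζ)).coeff j) 0 := by
    intro j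
    have : (fun ζ => (Pv n (φ ζ)).coeff j)
        = fun ζ => (if j = n then (1:ℂ) else 0)
          + ∑ i : Fin n, ((-1:ℂ) ^ ((i:ℕ)+1) * φ ζ i) * (if j = n - ((i:ℕ)+1) then 1 else 0) :=
      funext fun ζ => coeff_Pv n (φ ζ) j
    rw [this]
    exact analyticAt_const.add (Finset.analyticAt_fun_sum _ fun i _ =>
      (analyticAt_const.mul (hφa i)).mul analyticAt_const)
  have hEa : ∀ r : ℕ, AnalyticAt ℂ (fun ζ => ∑ j ∈ Finset.Icc k n,
      (Pv n (φ ζ)).coeff j * ((j.choose (k+r)) : ℂ) * (lam ⟨0, hs⟩) ^ (j - (k+r))) 0 :=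
    fun r => Finset.analyticAt_fun_sum _ fun j _ =>
      ((hcoeffA j).mul analyticAt_const).mul analyticAt_const
  have hydA : ∀ t : Fin (k+1), Van (fun ζ => φd ((t:ℕ)+1) ζ - lam ⟨0, hs⟩) 1 := by
    intro t
    have ht : (t:ℕ)+1 ≤ m ⟨0, hs⟩ := by have := t.isLt; omega
    have hd := hφd ((t:ℕ)+1) (by omega) ht
    refine van_one ((hd.1.analyticAt hnhds).sub analyticAt_const) ?_
    rw [hd.2, sub_self]
  have hHfac : ∀ r : ℕ,
      Van (fun ζ => homogSum (k+1) r (fun t => φd ((t:ℕ)+1) ζ - lam ⟨0, hs⟩)) r := by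
    intro r
    unfold homogSum
    refine van_sum (Finset.Nat.antidiagonalTuple (k+1) r)
      (fun (c : Fin (k+1) → ℕ) ζ => ∏ t : Fin (k+1), (φd ((t:ℕ)+1) ζ - lam ⟨0, hs⟩) ^ c t) r
      fun c hc => ?_
    rw [Finset.Nat.mem_antidiagonalTuple] at hc
    have := van_prod Finset.univ
      (fun (t : Fin (k+1)) ζ => (φd ((t:ℕ)+1) ζ - lam ⟨0, hs⟩) ^ c t) c
      (fun t _ => van_pow (hydA t) (c t))
    exact hc ▸ this
  have hEd : ∀ r : ℕ, k + r < m ⟨0, hs⟩ →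
      Van (fun ζ => ∑ j ∈ Finset.Icc k n,
          (Pv n (φ ζ)).coeff j * ((j.choose (k+r)) : ℂ) * (lam ⟨0, hs⟩) ^ (j - (k+r)))
        (dIdx (B ⟨0, hs⟩) (m ⟨0, hs⟩ - (k+r))) := by
    intro r hr
    have hstar' := hstar ⟨0, hs⟩ (k+r) hr
    rw [show (fun ζ => (polyDeriv (k+r) (Pv n (φ ζ))).eval (lam ⟨0, hs⟩))
        = fun ζ => (((k+r).factorial : ℂ)) * ∑ j ∈ Finset.Icc k n,
            (Pv n (φ ζ)).coeff j * ((j.choose (k+r)) : ℂ) * (lam ⟨0, hs⟩) ^ (j - (k+r)) from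
      funext fun ζ => (E_deriv n k (k+r) (by omega) (Pv n (φ ζ))
        (natDegree_Pv_le n (φ ζ)) (lam ⟨0, hs⟩)).symm] at hstar'
    have hVan := van_of_vanishes (analyticAt_const.mul (hEa r)) hstar'
    have hfac : (fun ζ => ∑ j ∈ Finset.Icc k n,
        (Pv n (φ ζ)).coeff j * ((j.choose (k+r)) : ℂ) * (lam ⟨0, hs⟩) ^ (j - (k+r)))
        = fun ζ => (((k+r).factorial : ℂ))⁻¹ * ((((k+r).factorial : ℂ)) * ∑ j ∈ Finset.Icc k n,
            (Pv n (φ ζ)).coeff j * ((j.choose (k+r)) : ℂ) * (lam ⟨0, hs⟩) ^ (j - (k+r))) := by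
      funext ζ
      rw [← mul_assoc, inv_mul_cancel₀ (Nat.cast_ne_zero.mpr (Nat.factorial_ne_zero (k+r))),
        one_mul]
    rw [hfac]
    exact van_const_mul _ hVan
  have hexp : (fun ζ => divDiff (Pv n (φ ζ)) k (fun t : Fin (k + 1) => φd ((t : ℕ) + 1) ζ))
      = fun ζ => ∑ r ∈ Finset.range (n-k+1),
          homogSum (k+1) r (fun t => φd ((t:ℕ)+1) ζ - lam ⟨0, hs⟩) *
            (∑ j ∈ Finset.Icc k n,
              (Pv n (φ ζ)).coeff j * ((j.choose (k+r)) : ℂ) * (lam ⟨0, hs⟩) ^ (j - (k+r))) := by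
    funext ζ
    exact divDiff_expand n k (Pv n (φ ζ)) (natDegree_Pv_le n (φ ζ)) (lam ⟨0, hs⟩)
      (fun t : Fin (k+1) => φd ((t:ℕ)+1) ζ)
  rw [hexp]
  refine van_vanishes (van_sum (Finset.range (n-k+1))
    (fun r ζ => homogSum (k+1) r (fun t => φd ((t:ℕ)+1) ζ - lam ⟨0, hs⟩) *
      (∑ j ∈ Finset.Icc k n,
        (Pv n (φ ζ)).coeff j * ((j.choose (k+r)) : ℂ) * (lam ⟨0, hs⟩) ^ (j - (k+r))))
    (dIdx (B ⟨0, hs⟩) (m ⟨0, hs⟩ - k)) fun r _ => ?_)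
  by_cases hcase : k + r < m ⟨0, hs⟩
  · have hmul := van_mul (hHfac r) (hEd r hcase)
    refine van_mono hmul ?_
    have hsub := dIdx_sub_le (B ⟨0, hs⟩) (m ⟨0, hs⟩ - k) r
    rw [show m ⟨0, hs⟩ - k - r = m ⟨0, hs⟩ - (k+r) from by omega] at hsub
    omega
  · have hmul := van_mul (hHfac r) (van_zero (hEa r))
    refine van_mono hmul ?_
    have hD := dIdx_le (B ⟨0, hs⟩) (m ⟨0, hs⟩ - k) (by omega)
    omega
end

section
/- Let A = diag(B_1,…,B_s) be a block Jordan matrix in Ω_n with s ≥ 2, whose first block B_1 has size m_1 and eigenvalue λ_1 and whose second block B_2 has size m_2 and eigenvalue λ_2 ≠ λ_1. Let φ : D → G_n be holomorphic and satisfy the conditions (★) at 0 relative to A. Let φ_{1,1},…,φ_{m_1,m_1} : D → ℂ be holomorphic with φ_{i,i}(0) = λ_1 for 1 ≤ i ≤ m_1, and suppose that for some integer d ≥ d_{m_2}(B_2) one has Δ^k P_{[φ(ζ)]}(φ_{1,1}(ζ),…,φ_{k+1,k+1}(ζ)) = O(ζ^d) for all 0 ≤ k ≤ m_1 − 1. Let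 φ_{m_1+1,m_1+1} : D → ℂ be any holomorphic function with φ_{m_1+1,m_1+1}(0) = λ_2. Then Δ^{m_1} P_{[φ(ζ)]}(φ_{1,1}(ζ),…,φ_{m_1,m_1}(ζ), φ_{m_1+1,m_1+1}(ζ)) = O(ζ^{d_{m_2}(B_2)}) at 0. -/
open Polynomial

namespace S9
open Filter

def W (f : ℂ → ℂ) (d : ℕ) : Prop :=
  ∃ g : ℂ → ℂ, AnalyticAt ℂ g 0 ∧ f =ᶠ[nhds 0] fun z => z ^ d * g z

lemma analyticAt_deriv {g : ℂ → ℂ} (h : AnalyticAt ℂ g 0) : AnalyticAt ℂ (deriv g) 0 := by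
  obtain ⟨s, hs, h2⟩ := h.eventually_analyticAt.exists_mem
  exact (AnalyticOnNhd.deriv (fun y hy => h2 y hy)) 0 (mem_of_mem_nhds hs)

lemma deriv_pow_mul {g : ℂ → ℂ} (h : AnalyticAt ℂ g 0) (d : ℕ) :
    (deriv fun z => z ^ (d + 1) * g z) =ᶠ[nhds 0]
      fun z => z ^ d * (((d : ℂ) + 1) * g z + z * deriv g z) := by
  filter_upwards [h.eventually_analyticAt] with z hz
  rw [deriv_fun_mul (by fun_prop) hz.differentiableAt]
  simp only [deriv_pow_field, Nat.add_sub_cancel]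
  push_cast
  ring

lemma aux_analytic {g : ℂ → ℂ} (h : AnalyticAt ℂ g 0) (d : ℕ) :
    AnalyticAt ℂ (fun z => ((d : ℂ) + 1) * g z + z * deriv g z) 0 :=
  (analyticAt_const.mul h).add ((analyticAt_id).mul (analyticAt_deriv h))

lemma W.vanishes {f : ℂ → ℂ} {d : ℕ} (h : W f d) : VanishesToOrder f 0 d := by
  induction d generalizing f with
  | zero => intro i hi; omega
  | succ d ih =>
    obtain ⟨g, hg, hfg⟩ := h
    intro i hi
    rw [hfg.iteratedDeriv_eq]
    cases i with
    | zero => simp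
    | succ i =>
      rw [iteratedDeriv_succ']
      have hW : W (deriv fun z => z ^ (d + 1) * g z) d :=
        ⟨_, aux_analytic hg d, deriv_pow_mul hg d⟩
      exact ih hW i (by omega)

lemma iteratedDeriv_pow_mul {g : ℂ → ℂ} (h : AnalyticAt ℂ g 0) (d : ℕ) :
    iteratedDeriv d (fun z => z ^ d * g z) 0 = (Nat.factorial d : ℂ) * g 0 := by
  induction d generalizing g with
  | zero => simp
  | succ d ih =>
    rw [iteratedDeriv_succ', (deriv_pow_mul h d).iteratedDeriv_eq,
      ih (aux_analytic h d)]
    simp [Nat.factorial_succ]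
    ring

lemma W_of_vanishes {f : ℂ → ℂ} {d : ℕ} (hf : AnalyticAt ℂ f 0)
    (h : VanishesToOrder f 0 d) : W f d := by
  rcases eq_or_ne (analyticOrderAt f 0) ⊤ with ho | ho
  · refine ⟨0, analyticAt_const, ?_⟩
    filter_upwards [analyticOrderAt_eq_top.mp ho] with z hz
    simp [hz]
  · obtain ⟨nn, hn⟩ := WithTop.ne_top_iff_exists.mp ho
    obtain ⟨g, hg, hg0, hrep⟩ := (hf.analyticOrderAt_eq_natCast (n := nn)).mp hn.symm
    have hrep' : f =ᶠ[nhds 0] fun z => z ^ nn * g z := by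
      filter_upwards [hrep] with z hz
      simpa using hz
    have hle : d ≤ nn := by
      by_contra hlt
      push_neg at hlt
      have h0 : iteratedDeriv nn f 0 = 0 := h nn hlt
      rw [hrep'.iteratedDeriv_eq, iteratedDeriv_pow_mul hg] at h0
      have hfac : ((Nat.factorial nn : ℕ) : ℂ) ≠ 0 := Nat.cast_ne_zero.mpr (Nat.factorial_ne_zero nn)
      exact hg0 ((mul_eq_zero.mp h0).resolve_left hfac)
    refine ⟨fun z => z ^ (nn - d) * g z, (analyticAt_id.pow _).mul hg, ?_⟩
    filter_upwards [hrep'] with z hz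
    rw [hz, ← mul_assoc, ← pow_add, Nat.add_sub_cancel' hle]

lemma W.congr {f f' : ℂ → ℂ} {d : ℕ} (h : f =ᶠ[nhds 0] f') (hw : W f' d) : W f d := by
  obtain ⟨g, hg, hrep⟩ := hw
  exact ⟨g, hg, h.trans hrep⟩

lemma W.mono {f : ℂ → ℂ} {d e : ℕ} (h : W f d) (he : e ≤ d) : W f e := by
  obtain ⟨g, hg, hrep⟩ := h
  refine ⟨fun z => z ^ (d - e) * g z, (analyticAt_id.pow _).mul hg, ?_⟩
  filter_upwards [hrep] with z hz
  rw [hz, ← mul_assoc, ← pow_add, Nat.add_sub_cancel' he]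

lemma W.add {f f' : ℂ → ℂ} {d : ℕ} (h : W f d) (h' : W f' d) :
    W (fun z => f z + f' z) d := by
  obtain ⟨g, hg, hrep⟩ := h
  obtain ⟨g', hg', hrep'⟩ := h'
  refine ⟨fun z => g z + g' z, hg.add hg', ?_⟩
  filter_upwards [hrep, hrep'] with z h1 h2
  rw [h1, h2]; ring

lemma W.mul {f f' : ℂ → ℂ} {d d' : ℕ} (h : W f d) (h' : W f' d') :
    W (fun z => f z * f' z) (d + d') := by
  obtain ⟨g, hg, hrep⟩ := h
  obtain ⟨g', hg', hrep'⟩ := h'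
  refine ⟨fun z => g z * g' z, hg.mul hg', ?_⟩
  filter_upwards [hrep, hrep'] with z h1 h2
  rw [h1, h2, pow_add]; ring

lemma W_analytic {g : ℂ → ℂ} (hg : AnalyticAt ℂ g 0) : W g 0 :=
  ⟨g, hg, by filter_upwards with z; simp⟩

lemma W.mul_analytic {f g : ℂ → ℂ} {d : ℕ} (h : W f d) (hg : AnalyticAt ℂ g 0) :
    W (fun z => g z * f z) d := by
  have := (W_analytic hg).mul h
  simpa using this

lemma W.neg {f : ℂ → ℂ} {d : ℕ} (h : W f d) : W (fun z => -f z) d := by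
  obtain ⟨g, hg, hrep⟩ := h
  refine ⟨fun z => -g z, hg.neg, ?_⟩
  filter_upwards [hrep] with z hz
  rw [hz]; ring

lemma W.sub {f f' : ℂ → ℂ} {d : ℕ} (h : W f d) (h' : W f' d) :
    W (fun z => f z - f' z) d := by
  have := h.add h'.neg
  simpa [sub_eq_add_neg] using this

lemma W.pow {f : ℂ → ℂ} {d : ℕ} (h : W f d) (k : ℕ) :
    W (fun z => f z ^ k) (k * d) := by
  induction k with
  | zero => simpa using W_analytic analyticAt_const
  | succ k ih =>
    have h2 : (k + 1) * d = k * d + d := by ring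
    rw [h2]
    exact W.congr (by filter_upwards with z; rw [pow_succ]) (ih.mul h)

lemma W_sum {ι : Type*} {s : Finset ι} {F : ι → ℂ → ℂ} {d : ℕ}
    (h : ∀ i ∈ s, W (F i) d) : W (fun z => ∑ i ∈ s, F i z) d := by
  classical
  induction s using Finset.induction with
  | empty =>
    exact ⟨fun _ => 0, analyticAt_const, by filter_upwards with z; simp⟩
  | insert a s' hni ih =>
    simp only [Finset.sum_insert hni]
    exact (h a (Finset.mem_insert_self a s')).add
      (ih fun i hi => h i (Finset.mem_insert_of_mem hi))

lemma W.div_unit {u f : ℂ → ℂ} {d : ℕ} (hu : AnalyticAt ℂ u 0) (hu0 : u 0 ≠ 0)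
    (h : W (fun z => u z * f z) d) : W f d := by
  obtain ⟨g, hg, hrep⟩ := h
  refine ⟨fun z => g z / u z, hg.div hu hu0, ?_⟩
  have hne : ∀ᶠ z in nhds 0, u z ≠ 0 := hu.continuousAt.eventually_ne hu0
  filter_upwards [hrep, hne] with z h1 h2
  field_simp
  rw [← h1]; ring

lemma homogSum_perm {k d : ℕ} (x : Fin k → ℂ) (σ : Equiv.Perm (Fin k)) :
    homogSum k d (x ∘ σ) = homogSum k d x := by
  unfold homogSum
  refine Finset.sum_nbij' (fun c => c ∘ σ.symm) (fun c => c ∘ σ) ?_ ?_ ?_ ?_ ?_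
  · intro c hc
    rw [Finset.Nat.mem_antidiagonalTuple] at *
    rw [← hc]
    exact (Equiv.sum_comp σ.symm (fun i => c i)).symm ▸ Equiv.sum_comp σ.symm c
  · intro c hc
    rw [Finset.Nat.mem_antidiagonalTuple] at *
    rw [← hc]
    exact Equiv.sum_comp σ c
  · intro c _; funext i; simp
  · intro c _; funext i; simp
  · intro c _
    simp only [Function.comp_apply]
    rw [← Equiv.prod_comp σ (fun i => x i ^ c (σ.symm i))]
    exact Finset.prod_congr rfl fun i _ => by simp

lemma homogSum_cons {k d : ℕ} (y : ℂ) (x : Fin k → ℂ) :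
    homogSum (k + 1) d (Fin.cons y x) =
      ∑ p ∈ Finset.HasAntidiagonal.antidiagonal d, y ^ p.1 * homogSum k p.2 x := by
  unfold homogSum
  simp only [Finset.mul_sum]
  rw [Finset.sum_sigma']
  refine (Finset.sum_nbij' (i := fun pc => Fin.cons pc.1.1 pc.2)
    (j := fun c => ⟨(c 0, d - c 0), Fin.tail c⟩) ?_ ?_ ?_ ?_ ?_).symm
  · intro q hq
    simp only [Finset.mem_sigma, Finset.HasAntidiagonal.mem_antidiagonal,
      Finset.Nat.mem_antidiagonalTuple] at *
    rw [Fin.sum_cons, hq.2]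
    exact hq.1
  · intro c hc
    simp only [Finset.Nat.mem_antidiagonalTuple] at hc
    have h0 : c 0 + ∑ i, Fin.tail c i = d := by
      rw [← hc, Fin.sum_univ_succ]; rfl
    simp only [Finset.mem_sigma, Finset.HasAntidiagonal.mem_antidiagonal,
      Finset.Nat.mem_antidiagonalTuple]
    omega
  · intro q hq
    simp only [Finset.mem_sigma, Finset.HasAntidiagonal.mem_antidiagonal] at hq
    obtain ⟨⟨a, b⟩, c⟩ := q
    have hab : a + b = d := hq.1
    have hb : b = d - a := by omega
    subst hb
    simp only [Fin.cons_zero, Fin.tail_cons]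
  · intro c hc
    exact Fin.cons_self_tail c
  · intro q hq
    rw [Fin.prod_univ_succ]
    simp

lemma snoc_eq_cons_comp {k : ℕ} (x : Fin k → ℂ) (y : ℂ) :
    Fin.snoc x y = (Fin.cons y x : Fin (k + 1) → ℂ) ∘ (finRotate (k + 1)) := by
  funext i
  induction i using Fin.lastCases with
  | last => simp [finRotate_last]
  | cast j =>
    simp only [Function.comp_apply, finRotate_succ_apply, Fin.coeSucc_eq_succ,
      Fin.snoc_castSucc, Fin.cons_succ]

lemma homogSum_snoc {k d : ℕ} (x : Fin k → ℂ) (y : ℂ) :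
    homogSum (k + 1) d (Fin.snoc x y) =
      ∑ p ∈ Finset.HasAntidiagonal.antidiagonal d, y ^ p.1 * homogSum k p.2 x := by
  rw [snoc_eq_cons_comp, homogSum_perm, homogSum_cons]

lemma homogSum_zero {k : ℕ} (x : Fin k → ℂ) : homogSum k 0 x = 1 := by
  simp [homogSum, Finset.Nat.antidiagonalTuple_zero_right]

lemma homogSum_snoc_succ {k d : ℕ} (x : Fin k → ℂ) (y : ℂ) :
    homogSum (k + 1) (d + 1) (Fin.snoc x y) =
      homogSum k (d + 1) x + y * homogSum (k + 1) d (Fin.snoc x y) := by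
  rw [homogSum_snoc, homogSum_snoc, Finset.Nat.sum_antidiagonal_succ]
  simp only [pow_zero, one_mul, Finset.mul_sum]
  congr 1
  refine Finset.sum_congr rfl fun p _ => ?_
  rw [pow_succ]
  ring

lemma homog_sub {k : ℕ} (d : ℕ) (x : Fin k → ℂ) (y z : ℂ) :
    homogSum (k + 1) (d + 1) (Fin.snoc x y) - homogSum (k + 1) (d + 1) (Fin.snoc x z)
      = (y - z) * homogSum (k + 2) d (Fin.snoc (Fin.snoc x z) y) := by
  induction d with
  | zero =>
    rw [homogSum_snoc_succ, homogSum_snoc_succ, homogSum_zero, homogSum_zero, homogSum_zero]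
    ring
  | succ d ih =>
    rw [homogSum_snoc_succ x y, homogSum_snoc_succ x z,
      homogSum_snoc_succ (Fin.snoc x z) y]
    have expand : y * homogSum (k+1) (d+1) (Fin.snoc x y)
        - z * homogSum (k+1) (d+1) (Fin.snoc x z)
        = y * (homogSum (k+1) (d+1) (Fin.snoc x y) - homogSum (k+1) (d+1) (Fin.snoc x z))
          + (y - z) * homogSum (k+1) (d+1) (Fin.snoc x z) := by ring
    calc homogSum k (d+1+1) x + y * homogSum (k+1) (d+1) (Fin.snoc x y)
        - (homogSum k (d+1+1) x + z * homogSum (k+1) (d+1) (Fin.snoc x z))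
        = y * (homogSum (k+1) (d+1) (Fin.snoc x y) - homogSum (k+1) (d+1) (Fin.snoc x z))
          + (y - z) * homogSum (k+1) (d+1) (Fin.snoc x z) := by ring
      _ = (y - z) * (homogSum (k+1) (d+1) (Fin.snoc x z)
            + y * homogSum (k+2) d (Fin.snoc (Fin.snoc x z) y)) := by rw [ih]; ring


lemma homogSum_one (d : ℕ) (u : Fin 1 → ℂ) : homogSum 1 d u = u 0 ^ d := by
  simp [homogSum, Finset.Nat.antidiagonalTuple_one]

lemma divDiff_zero (P : Polynomial ℂ) (u : Fin 1 → ℂ) :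
    divDiff P 0 u = P.eval (u 0) := by
  unfold divDiff
  rw [Polynomial.eval_eq_sum_range]
  have hs : Finset.Icc 0 P.natDegree = Finset.range (P.natDegree + 1) := by
    ext a; simp
  rw [hs]
  exact Finset.sum_congr rfl fun j _ => by rw [Nat.sub_zero, homogSum_one]

lemma divDiff_rec (P : Polynomial ℂ) (k : ℕ) (x : Fin (k + 1) → ℂ) (y : ℂ) :
    divDiff P k (Fin.snoc (Fin.init x) y) - divDiff P k x
      = (y - x (Fin.last k)) * divDiff P (k + 1) (Fin.snoc x y) := by
  unfold divDiff
  rw [← Finset.sum_sub_distrib]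
  have hT : ∀ j ∈ Finset.Icc k P.natDegree,
      P.coeff j * homogSum (k + 1) (j - k) (Fin.snoc (Fin.init x) y)
        - P.coeff j * homogSum (k + 1) (j - k) x
      = (fun j => if k + 1 ≤ j then
          (y - x (Fin.last k)) * (P.coeff j * homogSum (k + 2) (j - (k+1)) (Fin.snoc x y))
          else 0) j := by
    intro j hj
    simp only
    rcases le_or_gt (k+1) j with hj1 | hj1
    · rw [if_pos hj1]
      have hd : j - k = (j - (k+1)) + 1 := by omega
      have hs := homog_sub (j - (k+1)) (Fin.init x) y (x (Fin.last k))
      rw [Fin.snoc_init_self] at hs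
      rw [hd, ← mul_sub, hs]
      ring
    · rw [if_neg (by omega)]
      have hjk : j = k := by simp at hj; omega
      subst hjk
      rw [Nat.sub_self, homogSum_zero, homogSum_zero, sub_self]
  rw [Finset.sum_congr rfl hT]
  rw [Finset.sum_ite, Finset.sum_const_zero, add_zero]
  rw [← Finset.mul_sum]
  congr 1
  apply Finset.sum_congr
  · ext a; simp; omega
  · intros; rfl

lemma newton (P : Polynomial ℂ) (M : ℕ) (x : ℕ → ℂ) (y : ℂ) :
    P.eval y = (∑ k ∈ Finset.range M, (∏ i ∈ Finset.range k, (y - x i)) *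
        divDiff P k (fun t : Fin (k + 1) => x (t : ℕ)))
      + (∏ i ∈ Finset.range M, (y - x i)) *
        divDiff P M (Fin.snoc (fun t : Fin M => x (t : ℕ)) y) := by
  induction M with
  | zero =>
    have h0 : (Fin.snoc (fun t : Fin 0 => x (t : ℕ)) y : Fin 1 → ℂ) 0 = y := by
      simp [Fin.snoc]
    simp [divDiff_zero, h0]
  | succ M ih =>
    have hrec := divDiff_rec P M (fun t : Fin (M + 1) => x (t : ℕ)) y
    have hini : Fin.init (fun t : Fin (M + 1) => x (t : ℕ)) = fun t : Fin M => x (t : ℕ) := by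
      funext t; simp [Fin.init]
    rw [hini, Fin.val_last] at hrec
    rw [Finset.sum_range_succ, Finset.prod_range_succ]
    have : divDiff P M (Fin.snoc (fun t : Fin M => x (t : ℕ)) y)
        = divDiff P M (fun t : Fin (M + 1) => x (t : ℕ))
          + (y - x M) * divDiff P (M + 1) (Fin.snoc (fun t : Fin (M + 1) => x (t : ℕ)) y) := by
      rw [← hrec]; ring
    rw [ih, this]
    ring

lemma Pv_coeff (n : ℕ) (v : Fin n → ℂ) (j : ℕ) :
    (Pv n v).coeff j = ((X : Polynomial ℂ) ^ n).coeff j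
      + ∑ i : Fin n, ((-1 : ℂ) ^ ((i : ℕ) + 1)
          * ((X : Polynomial ℂ) ^ (n - ((i : ℕ) + 1))).coeff j) * v i := by
  simp only [Pv, Polynomial.coeff_add, Polynomial.finset_sum_coeff, Polynomial.coeff_C_mul]
  congr 1
  exact Finset.sum_congr rfl fun i _ => by ring

lemma Pv_natDegree (n : ℕ) (v : Fin n → ℂ) : (Pv n v).natDegree = n := by
  rcases Nat.eq_zero_or_pos n with hn | hn
  · subst hn
    simp [Pv]
  · have hle : (Pv n v).natDegree ≤ n := by
      refine le_trans (Polynomial.natDegree_add_le _ _) (max_le (by simp) ?_)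
      refine Polynomial.natDegree_sum_le_of_forall_le _ _ fun i _ => ?_
      refine le_trans (Polynomial.natDegree_C_mul_le _ _) ?_
      simp only [Polynomial.natDegree_X_pow]
      omega
    have hcoeff : (Pv n v).coeff n = 1 := by
      rw [Pv_coeff, Polynomial.coeff_X_pow, if_pos rfl]
      have hz : ∀ i : Fin n, ((-1 : ℂ) ^ ((i : ℕ) + 1)
          * ((X : Polynomial ℂ) ^ (n - ((i : ℕ) + 1))).coeff n) * v i = 0 := by
        intro i
        rw [Polynomial.coeff_X_pow, if_neg (by omega), mul_zero, zero_mul]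
      rw [Finset.sum_congr rfl fun i _ => hz i]
      simp
    exact le_antisymm hle (Polynomial.le_natDegree_of_ne_zero (by rw [hcoeff]; exact one_ne_zero))


lemma taylor_eval (P : Polynomial ℂ) (nn : ℕ) (hdeg : P.natDegree ≤ nn) (lam y : ℂ) :
    P.eval y = ∑ i ∈ Finset.range (nn + 1),
      ((Polynomial.taylor lam P).coeff i) * (y - lam) ^ i := by
  conv_lhs => rw [← Polynomial.sum_taylor_eq P lam]
  rw [Polynomial.sum_over_range' (Polynomial.taylor lam P)
    (fun _ => by simp) (nn + 1) (by rw [Polynomial.natDegree_taylor]; omega)]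
  rw [Polynomial.eval_finset_sum]
  exact Finset.sum_congr rfl fun i _ => by simp

lemma taylor_coeff_polyDeriv (P : Polynomial ℂ) (lam : ℂ) (i : ℕ) :
    (Nat.factorial i : ℂ) * (Polynomial.taylor lam P).coeff i = (polyDeriv i P).eval lam := by
  rw [Polynomial.taylor_coeff]
  have h := congrFun (Polynomial.factorial_smul_hasseDeriv (R := ℂ) i) P
  have h2 : polyDeriv i P = (⇑(Polynomial.derivative (R := ℂ)))^[i] P := by
    unfold polyDeriv; rfl
  rw [h2, ← h]
  simp

lemma taylor_coeff_formula (P : Polynomial ℂ) (nn : ℕ) (hdeg : P.natDegree ≤ nn)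
    (lam : ℂ) (i : ℕ) :
    (Polynomial.taylor lam P).coeff i
      = ∑ j ∈ Finset.range (nn + 1), ((j + i).choose i : ℂ) * P.coeff (j + i) * lam ^ j := by
  rw [Polynomial.taylor_coeff]
  rw [Polynomial.eval_eq_sum_range' (n := nn + 1)
    (lt_of_le_of_lt ((Polynomial.natDegree_hasseDeriv_le P i).trans
      ((Nat.sub_le _ _).trans hdeg)) (Nat.lt_succ_self _))]
  exact Finset.sum_congr rfl fun j _ => by rw [Polynomial.hasseDeriv_coeff]

lemma card_filter_Icc_le {p : ℕ → Prop} [DecidablePred p] (M i : ℕ) :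
    (Finset.filter p (Finset.Icc 2 M)).card
      ≤ (Finset.filter p (Finset.Icc (i + 2) M)).card + i := by
  have hsub : Finset.filter p (Finset.Icc 2 M)
      ⊆ Finset.filter p (Finset.Icc (i + 2) M) ∪ Finset.Icc 2 (i + 1) := by
    intro j hj
    simp only [Finset.mem_filter, Finset.mem_Icc, Finset.mem_union] at *
    rcases le_or_gt (i + 2) j with h | h
    · exact Or.inl ⟨⟨h, hj.1.2⟩, hj.2⟩
    · exact Or.inr ⟨hj.1.1, by omega⟩
  have h2 := Finset.card_le_card hsub
  have h3 := Finset.card_union_le (Finset.filter p (Finset.Icc (i + 2) M))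
    (Finset.Icc 2 (i + 1))
  have h4 : (Finset.Icc 2 (i + 1)).card = i := by rw [Nat.card_Icc]; omega
  omega

lemma dIdx_le {mm : ℕ} (B : Matrix (Fin mm) (Fin mm) ℂ) {i : ℕ} (hi : 1 ≤ i) :
    dIdx B i ≤ i := by
  unfold dIdx
  refine le_trans (Nat.add_le_add_left (Finset.card_filter_le _ _) 1) ?_
  rw [Nat.card_Icc]
  omega

lemma dIdx_le_add {mm : ℕ} (B : Matrix (Fin mm) (Fin mm) ℂ) {i : ℕ} (hi : i < mm) :
    dIdx B mm ≤ dIdx B (mm - i) + i := by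
  unfold dIdx
  have e1 : mm - mm + 2 = 2 := by omega
  have e2 : mm - (mm - i) + 2 = i + 2 := by omega
  rw [e1, e2]
  have h := card_filter_Icc_le
    (p := fun j => ∀ (h1 : j - 2 < mm) (h2 : j - 1 < mm), B ⟨j - 2, h1⟩ ⟨j - 1, h2⟩ = 0)
    mm i
  omega

end S9

/-- Lemma 4.6(b): the `m_1`-th divided difference with an extra node tending
to `λ_2` vanishes to order `d_{m_2}(B_2)`. -/
theorem statement9 (n s : ℕ) (h0 : 0 < s) (h1 : 1 < s) (m : Fin s → ℕ) (lam : Fin s → ℂ)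
    (B : ∀ j : Fin s, Matrix (Fin (m j)) (Fin (m j)) ℂ)
    (A : Matrix (Fin n) (Fin n) ℂ) (hBJ : IsBlockJordan m lam B A)
    (hAΩ : A ∈ SpectralBall n)
    (hlam : lam ⟨1, h1⟩ ≠ lam ⟨0, h0⟩)
    (φ : ℂ → Fin n → ℂ) (hφ : DifferentiableOn ℂ φ unitDisc)
    (hφG : Set.MapsTo φ unitDisc (SymPolydisc n))
    (hstar : StarConditions m lam B φ 0)
    (φd : ℕ → ℂ → ℂ)
    (hφd : ∀ i, 1 ≤ i → i ≤ m ⟨0, h0⟩ →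
      DifferentiableOn ℂ (φd i) unitDisc ∧ φd i 0 = lam ⟨0, h0⟩)
    (hψ : DifferentiableOn ℂ (φd (m ⟨0, h0⟩ + 1)) unitDisc ∧
      φd (m ⟨0, h0⟩ + 1) 0 = lam ⟨1, h1⟩)
    (d : ℕ) (hd : dIdx (B ⟨1, h1⟩) (m ⟨1, h1⟩) ≤ d)
    (hhyp : ∀ k < m ⟨0, h0⟩,
      VanishesToOrder
        (fun ζ => divDiff (Pv n (φ ζ)) k (fun t : Fin (k + 1) => φd ((t : ℕ) + 1) ζ)) 0 d) :
    VanishesToOrder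
      (fun ζ => divDiff (Pv n (φ ζ)) (m ⟨0, h0⟩)
        (fun t : Fin (m ⟨0, h0⟩ + 1) => φd ((t : ℕ) + 1) ζ)) 0
      (dIdx (B ⟨1, h1⟩) (m ⟨1, h1⟩)) := by
  classical
  open S9 in
  obtain ⟨hsum, hinj, hmpos, hSJ, hdiag, hoff⟩ := hBJ
  have hop : IsOpen unitDisc := Metric.isOpen_ball
  have h0m : (0 : ℂ) ∈ unitDisc := by simp [unitDisc]
  have hnhds : unitDisc ∈ nhds (0 : ℂ) := hop.mem_nhds h0m
  have hφi : ∀ i : Fin n, AnalyticAt ℂ (fun ζ => φ ζ i) 0 := by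
    intro i
    have hdo : DifferentiableOn ℂ (fun ζ => φ ζ i) unitDisc :=
      fun z hz => (differentiableWithinAt_pi.mp (hφ z hz)) i
    exact hdo.analyticAt hnhds
  have hXa : ∀ i : ℕ, i < m ⟨0, h0⟩ → AnalyticAt ℂ (φd (i + 1)) 0 ∧ φd (i + 1) 0 = lam ⟨0, h0⟩ :=
    fun i hi => ⟨((hφd (i + 1) (by omega) (by omega)).1).analyticAt hnhds,
      (hφd (i + 1) (by omega) (by omega)).2⟩
  have hYa : AnalyticAt ℂ (φd (m ⟨0, h0⟩ + 1)) 0 := hψ.1.analyticAt hnhds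
  have hY0 : φd (m ⟨0, h0⟩ + 1) 0 = lam ⟨1, h1⟩ := hψ.2
  -- coefficient analyticity
  have hcA : ∀ j : ℕ, AnalyticAt ℂ (fun ζ => (Pv n (φ ζ)).coeff j) 0 := by
    intro j
    have heq : (fun ζ => (Pv n (φ ζ)).coeff j)
        = fun ζ => ((X : Polynomial ℂ) ^ n).coeff j
          + ∑ i : Fin n, ((-1 : ℂ) ^ ((i : ℕ) + 1)
              * ((X : Polynomial ℂ) ^ (n - ((i : ℕ) + 1))).coeff j) * φ ζ i :=
      funext fun ζ => S9.Pv_coeff n (φ ζ) j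
    rw [heq]
    exact analyticAt_const.add
      (Finset.analyticAt_fun_sum _ fun i _ => analyticAt_const.mul (hφi i))
  -- homogSum analyticity
  have hHomA : ∀ (k dd : ℕ) (u : Fin k → ℂ → ℂ), (∀ t, AnalyticAt ℂ (u t) 0) →
      AnalyticAt ℂ (fun ζ => homogSum k dd (fun t => u t ζ)) 0 := by
    intro k dd u hu
    have heq : (fun ζ => homogSum k dd (fun t => u t ζ))
        = fun ζ => ∑ c ∈ Finset.Nat.antidiagonalTuple k dd, ∏ t, u t ζ ^ c t := rfl
    rw [heq]
    exact Finset.analyticAt_fun_sum _ fun c _ =>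
      Finset.analyticAt_fun_prod _ fun t _ => (hu t).pow _
  -- divDiff analyticity
  have hdivA : ∀ (k : ℕ) (u : Fin (k + 1) → ℂ → ℂ), (∀ t, AnalyticAt ℂ (u t) 0) →
      AnalyticAt ℂ (fun ζ => divDiff (Pv n (φ ζ)) k (fun t => u t ζ)) 0 := by
    intro k u hu
    have heq : (fun ζ => divDiff (Pv n (φ ζ)) k (fun t => u t ζ))
        = fun ζ => ∑ j ∈ Finset.Icc k n,
            (Pv n (φ ζ)).coeff j * homogSum (k + 1) (j - k) (fun t => u t ζ) := by
      funext ζ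
      rw [divDiff, S9.Pv_natDegree]
    rw [heq]
    exact Finset.analyticAt_fun_sum _ fun j _ => (hcA j).mul (hHomA _ _ u hu)
  -- analyticity of the star functions
  have hSA : ∀ i : ℕ, AnalyticAt ℂ (fun ζ => (polyDeriv i (Pv n (φ ζ))).eval (lam ⟨1, h1⟩)) 0 := by
    intro i
    have heq : (fun ζ => (polyDeriv i (Pv n (φ ζ))).eval (lam ⟨1, h1⟩))
        = fun ζ => (Nat.factorial i : ℂ) * ∑ j ∈ Finset.range (n + 1),
            ((j + i).choose i : ℂ) * (Pv n (φ ζ)).coeff (j + i) * lam ⟨1, h1⟩ ^ j := by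
      funext ζ
      rw [← S9.taylor_coeff_polyDeriv,
        S9.taylor_coeff_formula (Pv n (φ ζ)) n (le_of_eq (S9.Pv_natDegree n (φ ζ)))]
    rw [heq]
    exact analyticAt_const.mul (Finset.analyticAt_fun_sum _ fun j _ =>
      (analyticAt_const.mul (hcA (j + i))).mul analyticAt_const)
  -- W for the Taylor-coefficient functions
  have hcoeffW : ∀ i : ℕ,
      AnalyticAt ℂ (fun ζ => (Polynomial.taylor (lam ⟨1, h1⟩) (Pv n (φ ζ))).coeff i) 0
      ∧ (i < m ⟨1, h1⟩ → S9.W (fun ζ => (Polynomial.taylor (lam ⟨1, h1⟩) (Pv n (φ ζ))).coeff i)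
          (dIdx (B ⟨1, h1⟩) (m ⟨1, h1⟩ - i))) := by
    intro i
    have heq : (fun ζ => (Polynomial.taylor (lam ⟨1, h1⟩) (Pv n (φ ζ))).coeff i)
        = fun ζ => ((Nat.factorial i : ℂ))⁻¹
            * (polyDeriv i (Pv n (φ ζ))).eval (lam ⟨1, h1⟩) := by
      funext ζ
      rw [← S9.taylor_coeff_polyDeriv]
      have : ((Nat.factorial i : ℕ) : ℂ) ≠ 0 := Nat.cast_ne_zero.mpr (Nat.factorial_ne_zero i)
      field_simp
    constructor
    · rw [heq]; exact analyticAt_const.mul (hSA i)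
    · intro hi
      rw [heq]
      exact (S9.W_of_vanishes (hSA i) (hstar ⟨1, h1⟩ i hi)).mul_analytic analyticAt_const
  -- W for powers of (y - λ2)
  have hpowW : ∀ i : ℕ, S9.W (fun ζ => (φd (m ⟨0, h0⟩ + 1) ζ - lam ⟨1, h1⟩) ^ i) i := by
    intro i
    have h1W : S9.W (fun ζ => φd (m ⟨0, h0⟩ + 1) ζ - lam ⟨1, h1⟩) 1 := by
      refine S9.W_of_vanishes (hYa.sub analyticAt_const) ?_
      intro k hk
      interval_cases k
      simpa [iteratedDeriv_zero] using sub_eq_zero.mpr hY0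
    have := h1W.pow i
    simpa using this
  have hm2pos : 0 < m ⟨1, h1⟩ := hmpos ⟨1, h1⟩
  have hd2le : dIdx (B ⟨1, h1⟩) (m ⟨1, h1⟩) ≤ m ⟨1, h1⟩ := S9.dIdx_le _ hm2pos
  -- W for the evaluation term
  have hE : S9.W (fun ζ => (Pv n (φ ζ)).eval (φd (m ⟨0, h0⟩ + 1) ζ))
      (dIdx (B ⟨1, h1⟩) (m ⟨1, h1⟩)) := by
    have heq : (fun ζ => (Pv n (φ ζ)).eval (φd (m ⟨0, h0⟩ + 1) ζ))
        = fun ζ => ∑ i ∈ Finset.range (n + 1),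
            (Polynomial.taylor (lam ⟨1, h1⟩) (Pv n (φ ζ))).coeff i
              * (φd (m ⟨0, h0⟩ + 1) ζ - lam ⟨1, h1⟩) ^ i :=
      funext fun ζ => S9.taylor_eval (Pv n (φ ζ)) n (le_of_eq (S9.Pv_natDegree n (φ ζ)))
        (lam ⟨1, h1⟩) (φd (m ⟨0, h0⟩ + 1) ζ)
    rw [heq]
    refine S9.W_sum fun i _ => ?_
    rcases lt_or_ge i (m ⟨1, h1⟩) with hi | hi
    · have hmul := ((hcoeffW i).2 hi).mul (hpowW i)
      exact hmul.mono (S9.dIdx_le_add (B ⟨1, h1⟩) hi)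
    · have hmul := (S9.W_analytic ((hcoeffW i).1)).mul (hpowW i)
      refine hmul.mono ?_
      omega
  -- W for the lower divided differences
  have hFk : ∀ k, k < m ⟨0, h0⟩ →
      S9.W (fun ζ => divDiff (Pv n (φ ζ)) k (fun t : Fin (k + 1) => φd ((t : ℕ) + 1) ζ))
        (dIdx (B ⟨1, h1⟩) (m ⟨1, h1⟩)) := by
    intro k hk
    have hA : AnalyticAt ℂ
        (fun ζ => divDiff (Pv n (φ ζ)) k (fun t : Fin (k + 1) => φd ((t : ℕ) + 1) ζ)) 0 := by
      refine hdivA k (fun t => φd ((t : ℕ) + 1)) fun t => ?_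
      have ht : (t : ℕ) < m ⟨0, h0⟩ := by omega
      exact (hXa t ht).1
    exact (S9.W_of_vanishes hA (hhyp k hk)).mono hd
  -- analyticity of partial products
  have hprodA : ∀ k, k ≤ m ⟨0, h0⟩ → AnalyticAt ℂ
      (fun ζ => ∏ i ∈ Finset.range k, (φd (m ⟨0, h0⟩ + 1) ζ - φd (i + 1) ζ)) 0 := by
    intro k hk
    refine Finset.analyticAt_fun_prod _ fun i hi => ?_
    have hi' : i < m ⟨0, h0⟩ := by
      have := Finset.mem_range.mp hi; omega
    exact hYa.sub (hXa i hi').1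
  -- the Newton identity, pointwise
  have hnew : ∀ ζ : ℂ, (Pv n (φ ζ)).eval (φd (m ⟨0, h0⟩ + 1) ζ)
      = (∑ k ∈ Finset.range (m ⟨0, h0⟩),
          (∏ i ∈ Finset.range k, (φd (m ⟨0, h0⟩ + 1) ζ - φd (i + 1) ζ))
            * divDiff (Pv n (φ ζ)) k (fun t : Fin (k + 1) => φd ((t : ℕ) + 1) ζ))
        + (∏ i ∈ Finset.range (m ⟨0, h0⟩), (φd (m ⟨0, h0⟩ + 1) ζ - φd (i + 1) ζ))
            * divDiff (Pv n (φ ζ)) (m ⟨0, h0⟩)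
              (fun t : Fin (m ⟨0, h0⟩ + 1) => φd ((t : ℕ) + 1) ζ) := by
    intro ζ
    have h := S9.newton (Pv n (φ ζ)) (m ⟨0, h0⟩) (fun i => φd (i + 1) ζ) (φd (m ⟨0, h0⟩ + 1) ζ)
    have hsn : Fin.snoc (fun t : Fin (m ⟨0, h0⟩) => φd ((t : ℕ) + 1) ζ) (φd (m ⟨0, h0⟩ + 1) ζ)
        = fun t : Fin (m ⟨0, h0⟩ + 1) => φd ((t : ℕ) + 1) ζ := by
      funext t
      induction t using Fin.lastCases with
      | last => simp
      | cast j => simp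
    rw [hsn] at h
    exact h
  -- conclude
  have hTW : S9.W (fun ζ =>
      (∏ i ∈ Finset.range (m ⟨0, h0⟩), (φd (m ⟨0, h0⟩ + 1) ζ - φd (i + 1) ζ))
        * divDiff (Pv n (φ ζ)) (m ⟨0, h0⟩)
          (fun t : Fin (m ⟨0, h0⟩ + 1) => φd ((t : ℕ) + 1) ζ))
      (dIdx (B ⟨1, h1⟩) (m ⟨1, h1⟩)) := by
    have heq : (fun ζ =>
        (∏ i ∈ Finset.range (m ⟨0, h0⟩), (φd (m ⟨0, h0⟩ + 1) ζ - φd (i + 1) ζ))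
          * divDiff (Pv n (φ ζ)) (m ⟨0, h0⟩)
            (fun t : Fin (m ⟨0, h0⟩ + 1) => φd ((t : ℕ) + 1) ζ))
        = fun ζ => (Pv n (φ ζ)).eval (φd (m ⟨0, h0⟩ + 1) ζ)
          - ∑ k ∈ Finset.range (m ⟨0, h0⟩),
            (∏ i ∈ Finset.range k, (φd (m ⟨0, h0⟩ + 1) ζ - φd (i + 1) ζ))
              * divDiff (Pv n (φ ζ)) k (fun t : Fin (k + 1) => φd ((t : ℕ) + 1) ζ) := by
      funext ζ
      rw [hnew ζ]
      ring
    rw [heq]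
    refine hE.sub (S9.W_sum fun k hk => ?_)
    have hk' : k < m ⟨0, h0⟩ := Finset.mem_range.mp hk
    exact (hFk k hk').mul_analytic (hprodA k hk'.le)
  have hu0 : (fun ζ => ∏ i ∈ Finset.range (m ⟨0, h0⟩),
      (φd (m ⟨0, h0⟩ + 1) ζ - φd (i + 1) ζ)) 0 ≠ 0 := by
    have hval : (fun ζ => ∏ i ∈ Finset.range (m ⟨0, h0⟩),
        (φd (m ⟨0, h0⟩ + 1) ζ - φd (i + 1) ζ)) 0
        = (lam ⟨1, h1⟩ - lam ⟨0, h0⟩) ^ (m ⟨0, h0⟩) := by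
      simp only
      rw [Finset.prod_congr rfl (fun i hi => by
        rw [hY0, (hXa i (Finset.mem_range.mp hi)).2])]
      rw [Finset.prod_const, Finset.card_range]
    rw [hval]
    exact pow_ne_zero _ (sub_ne_zero.mpr hlam)
  exact (hTW.div_unit (hprodA (m ⟨0, h0⟩) le_rfl) hu0).vanishes
end
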